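/- arXiv:0708.1550 — 5 statements merged into one kernel-verified Lean document; each statement's English description precedes it below -/
import Mathlib

section
/- Let f : D → ℂ be a bounded holomorphic function on the open unit disc D ⊆ ℂ with f(0) = 0. Let (aᵢ) be the sequence of zeros of f in D other than 0 (listed with multiplicity). If the infinite product ∏ᵢ |aᵢ| equals 0 (i.e., ∑ᵢ (1 - |aᵢ|) diverges, equivalently the partial products of moduli tend to 0), then f'(0) = 0. -/
open Complex Metric Filter Set

/-- The per-factor Blaschke boundary estimate. -/
lemma blaschke_ineq (aj z : ℂ) (r : ℝ) (hz : ‖z‖ = r) (hajr : ‖aj‖ < r) (hr : r < 1) :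
    ‖1 - (starRingEnd ℂ) aj * z‖ * (r - ‖aj‖) ≤ (1 - ‖aj‖ * r) * ‖z - aj‖ := by
  set s := ‖aj‖ with hs
  have hs0 : 0 ≤ s := norm_nonneg _
  have hr0 : 0 < r := lt_of_le_of_lt hs0 hajr
  set t : ℝ := ((starRingEnd ℂ) aj * z).re with ht
  have htle : t ≤ s * r := by
    calc t ≤ ‖(starRingEnd ℂ) aj * z‖ := Complex.re_le_norm _
    _ = s * r := by rw [norm_mul, RCLike.norm_conj, hz]
  have h1 : ‖1 - (starRingEnd ℂ) aj * z‖ ^ 2 = 1 - 2 * t + s ^ 2 * r ^ 2 := by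
    rw [Complex.sq_norm]
    have hn : Complex.normSq ((starRingEnd ℂ) aj * z) = (s * r) ^ 2 := by
      rw [← Complex.sq_norm, norm_mul, RCLike.norm_conj, hz]
    simp only [Complex.normSq_apply, Complex.sub_re, Complex.sub_im, Complex.one_re,
      Complex.one_im] at *
    nlinarith [hn]
  have h2 : ‖z - aj‖ ^ 2 = r ^ 2 - 2 * t + s ^ 2 := by
    rw [Complex.sq_norm]
    have hnz : Complex.normSq z = r ^ 2 := by rw [← Complex.sq_norm, hz]
    have hna : Complex.normSq aj = s ^ 2 := by rw [← Complex.sq_norm]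
    simp only [Complex.normSq_apply, Complex.sub_re, Complex.sub_im, Complex.mul_re,
      Complex.conj_re, Complex.conj_im] at *
    nlinarith [hnz, hna]
  have hL0 : 0 ≤ ‖1 - (starRingEnd ℂ) aj * z‖ * (r - s) :=
    mul_nonneg (norm_nonneg _) (by linarith)
  have hR0 : 0 ≤ (1 - s * r) * ‖z - aj‖ :=
    mul_nonneg (by nlinarith) (norm_nonneg _)
  have hsq : (‖1 - (starRingEnd ℂ) aj * z‖ * (r - s)) ^ 2 ≤ ((1 - s * r) * ‖z - aj‖) ^ 2 := by
    rw [mul_pow, mul_pow, h1, h2]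
    nlinarith [mul_nonneg (mul_nonneg (sub_nonneg.2 htle)
      (sub_nonneg.2 (by nlinarith : s ^ 2 ≤ 1))) (sub_nonneg.2 (by nlinarith : r ^ 2 ≤ 1))]
  nlinarith [hsq, hL0, hR0]

lemma iteratedDeriv_eventually_zero {f : ℂ → ℂ} {x : ℂ} (h : ∀ᶠ z in nhds x, f z = 0)
    (n : ℕ) : iteratedDeriv n f x = 0 := by
  induction n generalizing f with
  | zero => simpa using h.self_of_nhds
  | succ n ih =>
    rw [iteratedDeriv_succ']
    refine ih ?_
    have : deriv f =ᶠ[nhds x] deriv (fun _ : ℂ => (0 : ℂ)) :=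
      Filter.EventuallyEq.deriv (by filter_upwards [h] with z hz; simp [hz])
    filter_upwards [this] with z hz
    simp only [hz, deriv_const]

lemma iteratedDeriv_pow_mul_ne_zero {x : ℂ} :
    ∀ (n : ℕ) (f g : ℂ → ℂ), AnalyticAt ℂ g x → g x ≠ 0 →
      (∀ᶠ z in nhds x, f z = (z - x) ^ n * g z) → iteratedDeriv n f x ≠ 0 := by
  intro n
  induction n with
  | zero =>
    intro f g hg hgx heq
    simpa [heq.self_of_nhds] using hgx
  | succ n ih =>
    intro f g hg hgx heq
    rw [iteratedDeriv_succ']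
    have hne : ((n : ℂ) + 1) * g x + (x - x) * deriv g x ≠ 0 := by
      have h1 : ((n : ℂ) + 1) ≠ 0 := Nat.cast_add_one_ne_zero n
      simp only [sub_self, zero_mul, add_zero]
      exact mul_ne_zero h1 hgx
    refine ih (deriv f) (fun z => ((n : ℂ) + 1) * g z + (z - x) * deriv g z) ?_ hne ?_
    · have hg' : AnalyticAt ℂ (deriv g) x := by
        obtain ⟨s, hsmem, hs⟩ := hg.eventually_analyticAt.exists_mem
        exact (AnalyticOnNhd.deriv (fun z hz => hs z hz)) x (mem_of_mem_nhds hsmem)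
      exact (analyticAt_const.mul hg).add
        (((analyticAt_id).sub analyticAt_const).mul hg')
    · have hderiv : deriv f =ᶠ[nhds x]
          deriv (fun z => (z - x) ^ (n + 1) * g z) :=
        Filter.EventuallyEq.deriv heq
      filter_upwards [hderiv, hg.eventually_analyticAt] with z hz hgz
      rw [hz]
      have h1 : HasDerivAt (fun z : ℂ => (z - x) ^ (n + 1))
          (((n : ℂ) + 1) * (z - x) ^ n) z := by
        have := (hasDerivAt_pow (n + 1) (z - x)).comp z
          ((hasDerivAt_id z).sub_const x)
        simpa [Nat.cast_add, Function.comp_def] using this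
      have h2 : HasDerivAt g (deriv g z) z := hgz.differentiableAt.hasDerivAt
      rw [show (fun z => (z - x) ^ (n + 1) * g z) = (fun z => (z - x) ^ (n + 1)) * g from rfl,
        (h1.mul h2).deriv]
      ring

lemma order_ge_of_sInf (f : ℂ → ℂ) (x : ℂ) (hA : AnalyticAt ℂ f x) (hx0 : f x = 0)
    (k m : ℕ) (hm : sInf {n : ℕ | 0 < n ∧ iteratedDeriv n f x ≠ 0} = m) (hk : k < m) :
    ∃ w : ℂ → ℂ, AnalyticAt ℂ w x ∧ ∀ᶠ z in nhds x, f z = (z - x) ^ (k + 1) * w z := by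
  set S := {n : ℕ | 0 < n ∧ iteratedDeriv n f x ≠ 0} with hS
  have hSne : S.Nonempty := by
    by_contra h
    rw [Set.not_nonempty_iff_eq_empty] at h
    rw [h, Nat.sInf_empty] at hm
    omega
  have htop : analyticOrderAt f x ≠ ⊤ := by
    intro h
    obtain ⟨n₀, hn₀⟩ := hSne
    exact hn₀.2 (iteratedDeriv_eventually_zero (analyticOrderAt_eq_top.mp h) n₀)
  obtain ⟨n, hn⟩ : ∃ n : ℕ, analyticOrderAt f x = (n : ℕ∞) := by
    cases h : analyticOrderAt f x with
    | top => exact absurd h htop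
    | coe n => exact ⟨n, rfl⟩
  obtain ⟨g, hg, hgx, heq⟩ := (hA.analyticOrderAt_eq_natCast).mp hn
  simp only [smul_eq_mul] at heq
  have hnpos : 0 < n := by
    rcases Nat.eq_zero_or_pos n with h | h
    · exfalso
      apply hgx
      have := heq.self_of_nhds
      simpa [h, hx0] using this.symm
    · exact h
  have hnS : n ∈ S := ⟨hnpos, iteratedDeriv_pow_mul_ne_zero n f g hg hgx heq⟩
  have hmn : m ≤ n := hm ▸ Nat.sInf_le hnS
  have hkn : k + 1 ≤ n := by omega
  refine ⟨fun z => (z - x) ^ (n - (k + 1)) * g z, ?_, ?_⟩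
  · exact (((analyticAt_id).sub analyticAt_const).pow _).mul hg
  · filter_upwards [heq] with z hz
    rw [hz, ← mul_assoc, ← pow_add]
    congr 2
    omega

lemma analyticAt_finset_prod {ι : Type*} (s : Finset ι) (g : ι → ℂ → ℂ) (x : ℂ)
    (h : ∀ j ∈ s, AnalyticAt ℂ (g j) x) :
    AnalyticAt ℂ (fun z => ∏ j ∈ s, g j z) x := by
  classical
  induction s using Finset.induction with
  | empty => simpa using analyticAt_const
  | insert i s hns ih =>
    simp only [Finset.prod_insert hns]
    exact (h i (Finset.mem_insert_self i s)).mul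
      (ih fun j hj => h j (Finset.mem_insert_of_mem hj))

noncomputable def blaschkeChain (f : ℂ → ℂ) (a : ℕ → ℂ) : ℕ → ℂ → ℂ
  | 0 => dslope f 0
  | (i+1) => fun z =>
      (1 - (starRingEnd ℂ) (a i) * z) * dslope (blaschkeChain f a i) (a i) z

/-- Generalized Schwarz lemma: let `f` be a bounded holomorphic function on the open
unit disc with `f 0 = 0`, not identically zero, and let `(aᵢ)` be the sequence of its
zeros other than `0`, listed with multiplicity (each zero `x ≠ 0` appears exactly as
many times as the vanishing order of `f` at `x`). If the infinite product `∏ᵢ |aᵢ|`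
converges to `0`, then `f'(0) = 0`. -/
theorem deriv_zero_of_zero_product (f : ℂ → ℂ)
    (hf : DifferentiableOn ℂ f (Metric.ball (0 : ℂ) 1))
    (M : ℝ) (hM : 0 < M)
    (hbound : ∀ z ∈ Metric.ball (0 : ℂ) 1, ‖f z‖ ≤ M)
    (hf0 : f 0 = 0)
    (hnz : ∃ z ∈ Metric.ball (0 : ℂ) 1, f z ≠ 0)
    (a : ℕ → ℂ)
    (ha : ∀ i, a i ∈ Metric.ball (0 : ℂ) 1 ∧ a i ≠ 0 ∧ f (a i) = 0)
    (hmult : ∀ x ∈ Metric.ball (0 : ℂ) 1, x ≠ 0 → f x = 0 →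
      Set.encard {i | a i = x} =
        ((sInf {n : ℕ | 0 < n ∧ iteratedDeriv n f x ≠ 0} : ℕ) : ℕ∞))
    (hprod : Tendsto (fun N => ∏ i ∈ Finset.range N, ‖a i‖) atTop (nhds 0)) :
    deriv f 0 = 0 := by
  classical
  set ch := blaschkeChain f a with hch
  -- step0: the zero property at `a i`, given differentiability and the identity
  have step0 : ∀ i, DifferentiableOn ℂ (ch i) (Metric.ball (0 : ℂ) 1) →
      (∀ z : ℂ, (∏ j ∈ Finset.range i, (1 - (starRingEnd ℂ) (a j) * z)) * f z
        = (z * ∏ j ∈ Finset.range i, (z - a j)) * ch i z) →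
      ch i (a i) = 0 := by
    intro i hd hid
    obtain ⟨hxball, hxne, hxf⟩ := ha i
    set x := a i with hx
    have hAx : AnalyticAt ℂ f x := hf.analyticAt (isOpen_ball.mem_nhds hxball)
    set k := ((Finset.range i).filter (fun j => a j = x)).card with hk
    set m := sInf {n : ℕ | 0 < n ∧ iteratedDeriv n f x ≠ 0} with hm
    have hcount : Set.encard {j | a j = x} = (m : ℕ∞) := hmult x hxball hxne hxf
    have hkm : k < m := by
      have hsub : (↑(insert i ((Finset.range i).filter fun j => a j = x)) : Set ℕ)
          ⊆ {j | a j = x} := by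
        intro j hj
        simp only [Finset.coe_insert, Set.mem_insert_iff, Finset.coe_filter,
          Finset.mem_range, Set.mem_setOf_eq] at hj ⊢
        rcases hj with h | h
        · rw [h]
        · exact h.2
      have hcard : (insert i ((Finset.range i).filter fun j => a j = x)).card = k + 1 := by
        rw [Finset.card_insert_of_notMem (by simp)]
      have := Set.encard_le_encard hsub
      rw [Set.encard_coe_eq_coe_finsetCard, hcard, hcount] at this
      exact_mod_cast Nat.lt_of_succ_le (by exact_mod_cast this)
    obtain ⟨w, hw, hweq⟩ := order_ge_of_sInf f x hAx hxf k m rfl hkm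
    set Q : ℂ → ℂ := fun z => z * ∏ j ∈ (Finset.range i).filter (fun j => ¬ a j = x),
      (z - a j) with hQ
    have hsplit : ∀ z : ℂ, z * ∏ j ∈ Finset.range i, (z - a j) = (z - x) ^ k * Q z := by
      intro z
      rw [← Finset.prod_filter_mul_prod_filter_not (Finset.range i) (fun j => a j = x)
        (fun j => z - a j)]
      have : ∏ j ∈ (Finset.range i).filter (fun j => a j = x), (z - a j) = (z - x) ^ k := by
        rw [Finset.prod_congr rfl (fun j hj => by
          rw [(Finset.mem_filter.mp hj).2]), Finset.prod_const, hk]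
      rw [this, hQ]; ring
    set A : ℂ → ℂ := fun z =>
      (z - x) * ((∏ j ∈ Finset.range i, (1 - (starRingEnd ℂ) (a j) * z)) * w z) with hA
    set B : ℂ → ℂ := fun z => Q z * ch i z with hB
    have hfreq : ∀ᶠ z in nhdsWithin x {x}ᶜ, A z = B z := by
      have := eventually_nhdsWithin_of_eventually_nhds (a := x) (s := ({x}ᶜ : Set ℂ)) hweq
      filter_upwards [this, eventually_mem_nhdsWithin] with z hz hzx
      have hzx' : z ≠ x := hzx
      have h1 := hid z
      rw [hsplit z, hz] at h1
      have h2 : (z - x) ^ k * ((z - x) *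
          ((∏ j ∈ Finset.range i, (1 - (starRingEnd ℂ) (a j) * z)) * w z))
          = (z - x) ^ k * (Q z * ch i z) := by
        linear_combination h1
      exact mul_left_cancel₀ (pow_ne_zero k (sub_ne_zero.2 hzx')) h2
    have hPan : AnalyticAt ℂ
        (fun z => ∏ j ∈ Finset.range i, (1 - (starRingEnd ℂ) (a j) * z)) x :=
      analyticAt_finset_prod _ _ _ fun j _ =>
        analyticAt_const.sub (analyticAt_const.mul analyticAt_id)
    have hAan : AnalyticAt ℂ A x :=
      ((analyticAt_id.sub analyticAt_const)).mul (hPan.mul hw)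
    have hQan : AnalyticAt ℂ Q x :=
      analyticAt_id.mul (analyticAt_finset_prod _ _ _ fun j _ =>
        analyticAt_id.sub analyticAt_const)
    have hBan : AnalyticAt ℂ B x :=
      hQan.mul (hd.analyticAt (isOpen_ball.mem_nhds hxball))
    have heveq : A =ᶠ[nhds x] B :=
      (hAan.frequently_eq_iff_eventually_eq hBan).mp hfreq.frequently
    have hval := heveq.self_of_nhds
    have hAx0 : A x = 0 := by simp [hA]
    have hQx : Q x ≠ 0 := by
      rw [hQ]
      refine mul_ne_zero hxne (Finset.prod_ne_zero_iff.mpr fun j hj => ?_)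
      exact sub_ne_zero.2 (Ne.symm (Finset.mem_filter.mp hj).2)
    have h6 := hval
    rw [hAx0] at h6
    exact (mul_eq_zero.mp h6.symm).resolve_left hQx
  -- key: differentiability and the identity, by induction
  have key : ∀ i, DifferentiableOn ℂ (ch i) (Metric.ball (0 : ℂ) 1) ∧
      (∀ z : ℂ, (∏ j ∈ Finset.range i, (1 - (starRingEnd ℂ) (a j) * z)) * f z
        = (z * ∏ j ∈ Finset.range i, (z - a j)) * ch i z) := by
    intro i
    induction i with
    | zero =>
      constructor
      · exact (differentiableOn_dslope
          (isOpen_ball.mem_nhds (mem_ball_self one_pos))).mpr hf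
      · intro z
        simp only [Finset.range_zero, Finset.prod_empty, one_mul, mul_one]
        rcases eq_or_ne z 0 with rfl | hz
        · simp [hf0, hch, blaschkeChain]
        · rw [hch]
          show f z = z * dslope f 0 z
          rw [dslope_of_ne f hz, slope_def_field]
          field_simp [hf0]
          rw [hf0]; ring
    | succ i IH =>
      obtain ⟨hd, hid⟩ := IH
      have hz0 : ch i (a i) = 0 := step0 i hd hid
      have hstep : ∀ z : ℂ, (z - a i) * ch (i + 1) z
          = (1 - (starRingEnd ℂ) (a i) * z) * ch i z := by
        intro z
        rcases eq_or_ne z (a i) with rfl | hz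
        · simp [hz0]
        · show (z - a i) * ((1 - (starRingEnd ℂ) (a i) * z) * dslope (ch i) (a i) z) = _
          rw [dslope_of_ne _ hz, slope_def_field, hz0, sub_zero]
          field_simp [sub_ne_zero.2 hz]
      constructor
      · show DifferentiableOn ℂ
          (fun z => (1 - (starRingEnd ℂ) (a i) * z) * dslope (ch i) (a i) z) _
        exact ((differentiableOn_const _).sub
            ((differentiableOn_const _).mul differentiableOn_id)).mul
          ((differentiableOn_dslope (isOpen_ball.mem_nhds (ha i).1)).mpr hd)
      · intro z
        rw [Finset.prod_range_succ, Finset.prod_range_succ]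
        linear_combination (1 - (starRingEnd ℂ) (a i) * z) * hid z
          - (z * ∏ j ∈ Finset.range i, (z - a j)) * hstep z
  have hzeroAll : ∀ i, ch i (a i) = 0 := fun i => step0 i (key i).1 (key i).2
  -- value at 0
  have hval : ∀ N, deriv f 0 = (∏ j ∈ Finset.range N, (-(a j))) * ch N 0 := by
    intro N
    induction N with
    | zero => simp [hch, blaschkeChain, dslope_same]
    | succ N IH =>
      have hstep : ch N 0 = (-(a N)) * ch (N + 1) 0 := by
        show ch N 0 = (-(a N)) *
          ((1 - (starRingEnd ℂ) (a N) * 0) * dslope (ch N) (a N) 0)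
        rw [dslope_of_ne _ (Ne.symm (ha N).2.1), slope_def_field, hzeroAll N, sub_zero]
        field_simp [(ha N).2.1]
        ring
      rw [Finset.prod_range_succ, IH, hstep]
      ring
  -- the bound ‖ch N 0‖ ≤ M
  have hMb : ∀ N, ‖ch N 0‖ ≤ M := by
    intro N
    set c : ℝ := (insert ((1:ℝ)/2) ((Finset.range N).image fun j => ‖a j‖)).max'
      (Finset.insert_nonempty _ _) with hc
    have hc_lt : c < 1 := by
      rw [hc, Finset.max'_lt_iff]
      intro y hy
      rcases Finset.mem_insert.mp hy with rfl | hy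
      · norm_num
      · obtain ⟨j, _, rfl⟩ := Finset.mem_image.mp hy
        exact mem_ball_zero_iff.mp (ha j).1
    have hc_ge : (1:ℝ)/2 ≤ c := Finset.le_max' _ _ (Finset.mem_insert_self _ _)
    have hcj : ∀ j ∈ Finset.range N, ‖a j‖ ≤ c := by
      intro j hj
      rw [hc]
      exact Finset.le_max' _ ‖a j‖
        (Finset.mem_insert_of_mem (Finset.mem_image_of_mem (fun j => ‖a j‖) hj))
    have hbnd : ∀ r ∈ Set.Ioo c 1, ‖ch N 0‖ ≤
        (M / r) * ∏ j ∈ Finset.range N, (1 - ‖a j‖ * r) / (r - ‖a j‖) := by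
      rintro r ⟨hcr, hr1⟩
      have hr0 : 0 < r := by linarith
      have haj : ∀ j ∈ Finset.range N, ‖a j‖ < r := fun j hj =>
        lt_of_le_of_lt (hcj j hj) hcr
      have hrs : ∀ j ∈ Finset.range N, 0 < r - ‖a j‖ := fun j hj => by
        linarith [haj j hj]
      have h1sr : ∀ j ∈ Finset.range N, 0 < 1 - ‖a j‖ * r := fun j hj => by
        nlinarith [haj j hj, norm_nonneg (a j)]
      refine Complex.norm_le_of_forall_mem_frontier_norm_le
        (isBounded_ball (x := (0:ℂ)) (r := r)) ?_ ?_ ?_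
      · apply DifferentiableOn.diffContOnCl
        rw [closure_ball (0:ℂ) (ne_of_gt hr0)]
        exact (key N).1.mono (closedBall_subset_ball hr1)
      · rw [frontier_ball (0:ℂ) (ne_of_gt hr0)]
        intro z hz
        rw [mem_sphere_zero_iff_norm] at hz
        have hzb : z ∈ Metric.ball (0:ℂ) 1 := by
          rw [mem_ball_zero_iff, hz]; exact hr1
        have hE := congrArg norm ((key N).2 z)
        rw [norm_mul, norm_mul, norm_mul, norm_prod, norm_prod, hz] at hE
        set p1 := ∏ j ∈ Finset.range N, ‖1 - (starRingEnd ℂ) (a j) * z‖ with hp1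
        set p2 := ∏ j ∈ Finset.range N, ‖z - a j‖ with hp2
        have hp2pos : 0 < p2 := Finset.prod_pos fun j hj => by
          have := norm_sub_norm_le z (a j)
          have := hrs j hj
          rw [hz] at *
          linarith
        have hfz : ‖f z‖ ≤ M := hbound z hzb
        have hprodle : p1 * ∏ j ∈ Finset.range N, (r - ‖a j‖)
            ≤ (∏ j ∈ Finset.range N, (1 - ‖a j‖ * r)) * p2 := by
          rw [hp1, hp2, ← Finset.prod_mul_distrib, ← Finset.prod_mul_distrib]
          refine Finset.prod_le_prod (fun j hj =>
            mul_nonneg (norm_nonneg _) (le_of_lt (hrs j hj))) (fun j hj =>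
            blaschke_ineq (a j) z r hz (haj j hj) hr1)
        have hp1nn : 0 ≤ p1 := Finset.prod_nonneg fun j _ => norm_nonneg _
        have hgoal : ‖ch N z‖ * (r * ∏ j ∈ Finset.range N, (r - ‖a j‖))
            ≤ M * ∏ j ∈ Finset.range N, (1 - ‖a j‖ * r) := by
          have hkey : ‖ch N z‖ * (r * ∏ j ∈ Finset.range N, (r - ‖a j‖)) * p2
              ≤ M * (∏ j ∈ Finset.range N, (1 - ‖a j‖ * r)) * p2 := by
            have e1 : ‖ch N z‖ * (r * ∏ j ∈ Finset.range N, (r - ‖a j‖)) * p2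
                = (p1 * ‖f z‖) * ∏ j ∈ Finset.range N, (r - ‖a j‖) := by
              rw [hE]; ring
            rw [e1]
            calc (p1 * ‖f z‖) * ∏ j ∈ Finset.range N, (r - ‖a j‖)
                ≤ (p1 * M) * ∏ j ∈ Finset.range N, (r - ‖a j‖) := by
                  refine mul_le_mul_of_nonneg_right
                    (mul_le_mul_of_nonneg_left hfz hp1nn)
                    (Finset.prod_nonneg fun j hj => le_of_lt (hrs j hj))
              _ = M * (p1 * ∏ j ∈ Finset.range N, (r - ‖a j‖)) := by ring
              _ ≤ M * ((∏ j ∈ Finset.range N, (1 - ‖a j‖ * r)) * p2) :=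
                  mul_le_mul_of_nonneg_left hprodle (le_of_lt hM)
              _ = M * (∏ j ∈ Finset.range N, (1 - ‖a j‖ * r)) * p2 := by ring
          exact le_of_mul_le_mul_right hkey hp2pos
        have hden : 0 < r * ∏ j ∈ Finset.range N, (r - ‖a j‖) :=
          mul_pos hr0 (Finset.prod_pos hrs)
        rw [Finset.prod_div_distrib, div_mul_div_comm, le_div_iff₀ hden]
        exact hgoal
      · exact subset_closure (mem_ball_self hr0)
    have hlim : Tendsto (fun r : ℝ =>
        (M / r) * ∏ j ∈ Finset.range N, (1 - ‖a j‖ * r) / (r - ‖a j‖))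
        (nhdsWithin 1 (Set.Iio 1)) (nhds M) := by
      have hcont : Tendsto (fun r : ℝ =>
          (M / r) * ∏ j ∈ Finset.range N, (1 - ‖a j‖ * r) / (r - ‖a j‖))
          (nhds 1) (nhds ((M / 1) * ∏ j ∈ Finset.range N,
            (1 - ‖a j‖ * 1) / (1 - ‖a j‖))) := by
        refine Tendsto.mul ?_ (tendsto_finset_prod _ fun j _ => ?_)
        · exact (tendsto_const_nhds.div tendsto_id one_ne_zero)
        · have hne : (1:ℝ) - ‖a j‖ ≠ 0 :=
            ne_of_gt (by linarith [mem_ball_zero_iff.mp (ha j).1])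
          exact Tendsto.div
            (tendsto_const_nhds.sub (tendsto_const_nhds.mul tendsto_id))
            ((tendsto_id.sub tendsto_const_nhds)) (by simpa using hne)
        -- fix values
      have hval1 : (M / 1) * ∏ j ∈ Finset.range N, (1 - ‖a j‖ * 1) / (1 - ‖a j‖) = M := by
        have hone : ∀ j ∈ Finset.range N, (1 - ‖a j‖ * 1) / (1 - ‖a j‖) = 1 := by
          intro j hj
          rw [mul_one]
          exact div_self (ne_of_gt (by linarith [mem_ball_zero_iff.mp (ha j).1]))
        rw [Finset.prod_congr rfl hone, Finset.prod_const_one, div_one, mul_one]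
      rw [hval1] at hcont
      exact hcont.mono_left nhdsWithin_le_nhds
    refine ge_of_tendsto hlim ?_
    filter_upwards [Ioo_mem_nhdsLT_of_mem (Set.mem_Ioc.mpr ⟨hc_lt, le_refl 1⟩)] with r hr
    exact hbnd r hr
  -- conclusion
  have hfin : ∀ N, ‖deriv f 0‖ ≤ M * ∏ j ∈ Finset.range N, ‖a j‖ := by
    intro N
    rw [hval N, norm_mul, norm_prod]
    simp only [norm_neg]
    calc (∏ j ∈ Finset.range N, ‖a j‖) * ‖ch N 0‖
        ≤ (∏ j ∈ Finset.range N, ‖a j‖) * M :=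
          mul_le_mul_of_nonneg_left (hMb N)
            (Finset.prod_nonneg fun j _ => norm_nonneg _)
      _ = M * ∏ j ∈ Finset.range N, ‖a j‖ := mul_comm _ _
  have htend : Tendsto (fun N => M * ∏ j ∈ Finset.range N, ‖a j‖) atTop (nhds 0) := by
    simpa using hprod.const_mul M
  have h0 : ‖deriv f 0‖ ≤ 0 := ge_of_tendsto htend (Eventually.of_forall hfin)
  exact norm_le_zero_iff.mp h0
end

section
/- Let f : D → ℂ be holomorphic on the unit disc, surjective onto ℂ, and semi-proper (every connected component of the preimage of any compact subset of ℂ is compact in D). If f(0) = 0 and f'(0) ≠ 0, then the product of the moduli of the zeros of f other than 0, listed with multiplicity, is 0. -/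
open Complex Metric Filter Set Topology

set_option maxHeartbeats 1000000

lemma auxA {a z : ℂ} (ha : ‖a‖ < 1) (hz : ‖z‖ < 1) :
    (1 : ℂ) - (starRingEnd ℂ) a * z ≠ 0 := by
  intro h
  have h1 : (starRingEnd ℂ) a * z = 1 := by linear_combination -h
  have h2 : ‖(starRingEnd ℂ) a * z‖ < 1 := by
    rw [norm_mul, RCLike.norm_conj]
    nlinarith [norm_nonneg a, norm_nonneg z]
  rw [h1] at h2; simp at h2

lemma auxB {a z : ℂ} (ha : ‖a‖ ≤ 1) (hz : ‖z‖ ≤ 1) :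
    ‖a - z‖ ≤ ‖1 - (starRingEnd ℂ) a * z‖ := by
  have e1 : Complex.normSq (1 - (starRingEnd ℂ) a * z) - Complex.normSq (a - z)
      = (1 - Complex.normSq a) * (1 - Complex.normSq z) := by
    simp [Complex.normSq_apply, Complex.sub_re, Complex.sub_im, Complex.mul_re, Complex.mul_im,
      Complex.conj_re, Complex.conj_im]
    ring
  have h1 : Complex.normSq a ≤ 1 := by
    rw [Complex.normSq_eq_norm_sq]; nlinarith [norm_nonneg a]
  have h2 : Complex.normSq z ≤ 1 := by
    rw [Complex.normSq_eq_norm_sq]; nlinarith [norm_nonneg z]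
  have hsq : Complex.normSq (a - z) ≤ Complex.normSq (1 - (starRingEnd ℂ) a * z) := by nlinarith
  have := Real.sqrt_le_sqrt hsq
  rwa [← Complex.norm_def, ← Complex.norm_def] at this

lemma auxC {φ ψ : ℂ → ℂ} {w : ℂ} (hφ : ContinuousAt φ w) (hψ : ContinuousAt ψ w)
    (h : ∀ᶠ z in 𝓝[≠] w, φ z = ψ z) : φ w = ψ w :=
  tendsto_nhds_unique ((hφ.tendsto.mono_left nhdsWithin_le_nhds).congr' h)
    (hψ.tendsto.mono_left nhdsWithin_le_nhds)

lemma auxD {f : ℂ → ℂ} {w : ℂ} (hA : AnalyticAt ℂ f w) (hw : f w = 0)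
    (hne : ¬ ∀ᶠ z in 𝓝 w, f z = 0) :
    ∃ m : ℕ, 0 < m ∧ (m : ℕ) = sInf {n : ℕ | 0 < n ∧ iteratedDeriv n f w ≠ 0} ∧
      ∃ g : ℂ → ℂ, AnalyticAt ℂ g w ∧ g w ≠ 0 ∧ ∀ᶠ z in 𝓝 w, f z = (z - w) ^ m * g z := by
  obtain ⟨p, hp⟩ := hA
  have hp0 : p ≠ 0 := fun h => hne (hp.locally_zero_iff.mpr h)
  have hc0 : p.coeff 0 = 0 := by
    rw [show p.coeff 0 = p 0 1 from rfl, hp.coeff_zero, hw]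
  have hd : ∀ n : ℕ, iteratedDeriv n f w = (Nat.factorial n : ℂ) * p.coeff n := by
    intro n
    obtain ⟨r, hball⟩ := hp
    have h1 := hball.factorial_smul (1 : ℂ) n
    rw [iteratedDeriv_eq_iteratedFDeriv, ← h1, nsmul_eq_mul]
    rfl
  have hset : {n : ℕ | 0 < n ∧ iteratedDeriv n f w ≠ 0} = {n : ℕ | p n ≠ 0} := by
    ext n
    simp only [mem_setOf_eq]
    constructor
    · rintro ⟨hn, hnd⟩
      intro h
      exact hnd (by rw [hd n, FormalMultilinearSeries.coeff_eq_zero.mpr h, mul_zero])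
    · intro hpn
      have hcn : p.coeff n ≠ 0 := fun h => hpn (FormalMultilinearSeries.coeff_eq_zero.mp h)
      refine ⟨?_, ?_⟩
      · rcases Nat.eq_zero_or_pos n with rfl | h
        · exact absurd hc0 hcn
        · exact h
      · rw [hd n]
        exact mul_ne_zero (Nat.cast_ne_zero.mpr (Nat.factorial_ne_zero n)) hcn
  refine ⟨p.order, ?_, ?_, (Function.swap dslope w)^[p.order] f, ?_, ?_, ?_⟩
  · rcases Nat.eq_zero_or_pos p.order with h | h
    · exfalso
      have := (FormalMultilinearSeries.order_eq_zero_iff hp0).mp h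
      exact this (FormalMultilinearSeries.coeff_eq_zero.mp hc0)
    · exact h
  · rw [hset]; rfl
  · exact ⟨_, hp.has_fpower_series_iterate_dslope_fslope p.order⟩
  · exact hp.iterate_dslope_fslope_ne_zero hp0
  · filter_upwards with z
    simpa [smul_eq_mul] using hp.eq_pow_order_mul_iterate_dslope z

lemma auxF {f H g : ℂ → ℂ} {a : ℕ → ℂ} {w : ℂ} {N m : ℕ}
    (hH : DifferentiableOn ℂ H (Metric.ball (0:ℂ) 1))
    (hw1 : w ∈ Metric.ball (0:ℂ) 1)
    (hHeq : ∀ z ∈ Metric.ball (0:ℂ) 1, f z = (z * ∏ i ∈ Finset.range N, (a i - z)) * H z)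
    (hg : AnalyticAt ℂ g w)
    (hgev : ∀ᶠ z in 𝓝 w, f z = (z - w) ^ m * g z)
    (hcm : ((Finset.range N).filter (fun i => a i = w)).card ≤ m) :
    (-1:ℂ)^(((Finset.range N).filter (fun i => a i = w)).card) *
      (w * (∏ i ∈ (Finset.range N).filter (fun i => ¬ a i = w), (a i - w)) * H w)
    = (0:ℂ)^(m - ((Finset.range N).filter (fun i => a i = w)).card) * g w := by
  set c := ((Finset.range N).filter (fun i => a i = w)).card with hc
  set Q : ℂ → ℂ := fun z => ∏ i ∈ (Finset.range N).filter (fun i => ¬ a i = w), (a i - z)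
    with hQdef
  have hQcont : Continuous Q := by
    apply continuous_finset_prod
    intro i _
    exact continuous_const.sub continuous_id
  have hkey : ∀ᶠ z in 𝓝[≠] w, (-1:ℂ)^c * (z * Q z * H z) = (z - w)^(m - c) * g z := by
    have hball : Metric.ball (0:ℂ) 1 ∈ 𝓝 w := isOpen_ball.mem_nhds hw1
    filter_upwards [eventually_nhdsWithin_of_eventually_nhds (hgev.and hball),
      self_mem_nhdsWithin] with z hz hzw
    have hzb : z ∈ Metric.ball (0:ℂ) 1 := hz.2
    have hprod : ∏ i ∈ Finset.range N, (a i - z) = (w - z)^c * Q z := by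
      rw [← Finset.prod_filter_mul_prod_filter_not (Finset.range N) (fun i => a i = w)]
      congr 1
      rw [Finset.prod_congr rfl (fun i hi => by rw [(Finset.mem_filter.mp hi).2]),
        Finset.prod_const]
    have hswap : (w - z)^c = (-1:ℂ)^c * (z - w)^c := by
      rw [show w - z = -(z - w) from by ring, neg_pow]
    have hpowsplit : (z - w)^m = (z - w)^c * (z - w)^(m - c) := by
      rw [← pow_add, Nat.add_sub_cancel' hcm]
    have h2 : (z - w)^c * ((z - w)^(m - c) * g z)
        = (z * (((-1:ℂ)^c * (z - w)^c) * Q z)) * H z := by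
      rw [← mul_assoc, ← hpowsplit, ← hz.1, hHeq z hzb, hprod, hswap]
    have hcne : (z - w)^c ≠ 0 := pow_ne_zero _ (sub_ne_zero.mpr hzw)
    apply mul_left_cancel₀ hcne
    linear_combination -h2
  have h1 : ContinuousAt (fun z => (-1:ℂ)^c * (z * Q z * H z)) w := by
    have hHc : ContinuousAt H w :=
      ((hH w hw1).differentiableAt (isOpen_ball.mem_nhds hw1)).continuousAt
    exact continuousAt_const.mul ((continuousAt_id.mul hQcont.continuousAt).mul hHc)
  have h2 : ContinuousAt (fun z => (z - w)^(m - c) * g z) w :=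
    ((continuousAt_id.sub continuousAt_const).pow _).mul hg.continuousAt
  have heq := auxC h1 h2 hkey
  simpa [sub_self] using heq

lemma auxE (f : ℂ → ℂ) (hf : DifferentiableOn ℂ f (Metric.ball (0:ℂ) 1))
    (hf0 : f 0 = 0)
    (hnz : ∀ w ∈ Metric.ball (0:ℂ) 1, ¬ ∀ᶠ z in 𝓝 w, f z = 0)
    (a : ℕ → ℂ)
    (ha : ∀ i, a i ∈ Metric.ball (0 : ℂ) 1 ∧ a i ≠ 0 ∧ f (a i) = 0)
    (hmult : ∀ x ∈ Metric.ball (0 : ℂ) 1, x ≠ 0 → f x = 0 →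
      Set.encard {i | a i = x} =
        ((sInf {n : ℕ | 0 < n ∧ iteratedDeriv n f x ≠ 0} : ℕ) : ℕ∞))
    (N : ℕ) :
    ∃ H : ℂ → ℂ, DifferentiableOn ℂ H (Metric.ball (0:ℂ) 1) ∧
      ∀ z ∈ Metric.ball (0:ℂ) 1, f z = (z * ∏ i ∈ Finset.range N, (a i - z)) * H z := by
  induction N with
  | zero =>
    refine ⟨dslope f 0, (differentiableOn_dslope (isOpen_ball.mem_nhds (by simp))).mpr hf, ?_⟩
    intro z hz
    have h1 := sub_smul_dslope f 0 z
    simp only [sub_zero, hf0, smul_eq_mul] at h1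
    simpa using h1.symm
  | succ N ih =>
    obtain ⟨H, hH, hHeq⟩ := ih
    set w := a N with hwdef
    have hw1 : w ∈ Metric.ball (0:ℂ) 1 := (ha N).1
    have hw0 : w ≠ 0 := (ha N).2.1
    have hfw : f w = 0 := (ha N).2.2
    obtain ⟨m, hm0, hminf, g, hg, hgw, hgev⟩ :=
      auxD ((hf.analyticOnNhd isOpen_ball) w hw1) hfw (hnz w hw1)
    set c := ((Finset.range N).filter (fun i => a i = w)).card with hc
    have hcm : c < m := by
      have henc := hmult w hw1 hw0 hfw
      rw [← hminf] at henc
      have hN : N ∉ (((Finset.range N).filter (fun i => a i = w)) : Set ℕ) := by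
        intro h
        simp only [Finset.coe_filter, mem_setOf_eq, Finset.mem_range] at h
        exact lt_irrefl N h.1
      have hsub : insert N (((Finset.range N).filter (fun i => a i = w)) : Set ℕ)
          ⊆ {i | a i = w} := by
        rintro i (rfl | hi)
        · exact hwdef.symm
        · simp only [Finset.coe_filter, mem_setOf_eq, Finset.mem_range] at hi
          exact hi.2
      have hle := Set.encard_le_encard hsub
      rw [Set.encard_insert_of_notMem hN, Set.encard_coe_eq_coe_finsetCard, henc] at hle
      have : (c + 1 : ℕ∞) ≤ (m : ℕ∞) := by exact_mod_cast hle
      exact_mod_cast this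
    set Q : ℂ → ℂ := fun z => ∏ i ∈ (Finset.range N).filter (fun i => ¬ a i = w), (a i - z)
      with hQdef
    have hQcont : Continuous Q := by
      apply continuous_finset_prod
      intro i _
      exact continuous_const.sub continuous_id
    have hHw : H w = 0 := by
      have hkey : ∀ᶠ z in 𝓝[≠] w, (-1:ℂ)^c * (z * Q z * H z) = (z - w)^(m - c) * g z := by
        have hball : Metric.ball (0:ℂ) 1 ∈ 𝓝 w := isOpen_ball.mem_nhds hw1
        filter_upwards [eventually_nhdsWithin_of_eventually_nhds (hgev.and hball),
          self_mem_nhdsWithin] with z hz hzw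
        have hzb : z ∈ Metric.ball (0:ℂ) 1 := hz.2
        have hprod : ∏ i ∈ Finset.range N, (a i - z) = (w - z)^c * Q z := by
          rw [← Finset.prod_filter_mul_prod_filter_not (Finset.range N) (fun i => a i = w)]
          congr 1
          rw [Finset.prod_congr rfl (fun i hi => by rw [(Finset.mem_filter.mp hi).2]),
            Finset.prod_const]
        have hswap : (w - z)^c = (-1:ℂ)^c * (z - w)^c := by
          rw [show w - z = -(z - w) from by ring, neg_pow]
        have hpowsplit : (z - w)^m = (z - w)^c * (z - w)^(m - c) := by
          rw [← pow_add, Nat.add_sub_cancel' hcm.le]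
        have h2 : (z - w)^c * ((z - w)^(m - c) * g z)
            = (z * (((-1:ℂ)^c * (z - w)^c) * Q z)) * H z := by
          rw [← mul_assoc, ← hpowsplit, ← hz.1, hHeq z hzb, hprod, hswap]
        have hcne : (z - w)^c ≠ 0 := pow_ne_zero _ (sub_ne_zero.mpr hzw)
        apply mul_left_cancel₀ hcne
        linear_combination -h2
      have h1 : ContinuousAt (fun z => (-1:ℂ)^c * (z * Q z * H z)) w := by
        have hHc : ContinuousAt H w :=
          ((hH w hw1).differentiableAt (isOpen_ball.mem_nhds hw1)).continuousAt
        exact continuousAt_const.mul ((continuousAt_id.mul hQcont.continuousAt).mul hHc)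
      have h2 : ContinuousAt (fun z => (z - w)^(m - c) * g z) w :=
        (((continuousAt_id.sub continuousAt_const).pow _).mul hg.continuousAt)
      have heq := auxC h1 h2 hkey
      simp only [sub_self, zero_pow (Nat.sub_ne_zero_of_lt hcm), zero_mul] at heq
      have hQw : Q w ≠ 0 := by
        rw [hQdef]
        apply Finset.prod_ne_zero_iff.mpr
        intro i hi
        exact sub_ne_zero.mpr (Finset.mem_filter.mp hi).2
      have hn1 : ((-1:ℂ))^c ≠ 0 := pow_ne_zero _ (by norm_num)
      rcases mul_eq_zero.mp heq with h | h
      · exact absurd h hn1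
      · rcases mul_eq_zero.mp h with h' | h'
        · rcases mul_eq_zero.mp h' with h'' | h''
          · exact absurd h'' hw0
          · exact absurd h'' hQw
        · exact h'
    refine ⟨fun z => -(dslope H w z),
      ((differentiableOn_dslope (isOpen_ball.mem_nhds hw1)).mpr hH).neg, ?_⟩
    intro z hz
    have hds : H z = (z - w) * dslope H w z := by
      have := sub_smul_dslope H w z
      rw [hHw, sub_zero, smul_eq_mul] at this
      exact this.symm
    rw [hHeq z hz, hds, Finset.prod_range_succ, ← hwdef]
    ring

/-- Let `f` be holomorphic on the unit disc, surjective onto ℂ, and semi-proper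
(every connected component of the preimage of a compact set is compact in `D`).
If `f 0 = 0` and `f'(0) ≠ 0`, then the product of the moduli of the zeros of `f`
other than `0`, listed with multiplicity, is `0`: for any sequence `(aᵢ)`
enumerating those zeros with multiplicity, the partial products `∏_{i<N} |aᵢ|`
tend to `0`. -/
theorem zero_product_of_surjective_semiproper (f : ℂ → ℂ)
    (hf : DifferentiableOn ℂ f (Metric.ball (0 : ℂ) 1))
    (hsurj : ∀ w : ℂ, ∃ z ∈ Metric.ball (0 : ℂ) 1, f z = w)
    (hsemiproper : ∀ K : Set ℂ, IsCompact K →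
      ∀ z ∈ Metric.ball (0 : ℂ) 1 ∩ f ⁻¹' K,
        IsCompact (connectedComponentIn (Metric.ball (0 : ℂ) 1 ∩ f ⁻¹' K) z))
    (hf0 : f 0 = 0) (hf'0 : deriv f 0 ≠ 0)
    (a : ℕ → ℂ)
    (ha : ∀ i, a i ∈ Metric.ball (0 : ℂ) 1 ∧ a i ≠ 0 ∧ f (a i) = 0)
    (hmult : ∀ x ∈ Metric.ball (0 : ℂ) 1, x ≠ 0 → f x = 0 →
      Set.encard {i | a i = x} =
        ((sInf {n : ℕ | 0 < n ∧ iteratedDeriv n f x ≠ 0} : ℕ) : ℕ∞)) :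
    Tendsto (fun N => ∏ i ∈ Finset.range N, ‖a i‖) atTop (nhds 0) := by
  have h0mem : (0:ℂ) ∈ Metric.ball (0:ℂ) 1 := by simp
  have hfa : AnalyticOnNhd ℂ f (Metric.ball (0:ℂ) 1) := hf.analyticOnNhd isOpen_ball
  have hnz : ∀ w ∈ Metric.ball (0:ℂ) 1, ¬ ∀ᶠ z in 𝓝 w, f z = 0 := by
    intro w hw hev
    have heq : EqOn f 0 (Metric.ball (0:ℂ) 1) :=
      hfa.eqOn_zero_of_preconnected_of_eventuallyEq_zero
        (convex_ball (0:ℂ) 1).isPreconnected hw hev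
    have hev0 : f =ᶠ[𝓝 (0:ℂ)] (fun _ => 0) :=
      eventually_of_mem (isOpen_ball.mem_nhds h0mem) heq
    exact hf'0 (by rw [hev0.deriv_eq]; simp)
  have hanorm : ∀ i, ‖a i‖ < 1 := by
    intro i
    have := (ha i).1
    simpa [mem_ball, dist_zero_right] using this
  -- the partial products
  have hnonneg : ∀ N, 0 ≤ ∏ i ∈ Finset.range N, ‖a i‖ :=
    fun N => Finset.prod_nonneg fun i _ => norm_nonneg _
  have hanti : Antitone (fun N => ∏ i ∈ Finset.range N, ‖a i‖) := by
    apply antitone_nat_of_succ_le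
    intro n
    rw [Finset.prod_range_succ]
    exact mul_le_of_le_one_right (hnonneg n) (hanorm n).le
  have hbdd : BddBelow (Set.range (fun N => ∏ i ∈ Finset.range N, ‖a i‖)) := by
    refine ⟨0, ?_⟩
    rintro x ⟨N, rfl⟩
    exact hnonneg N
  have htend : Tendsto (fun N => ∏ i ∈ Finset.range N, ‖a i‖) atTop
      (𝓝 (⨅ N, ∏ i ∈ Finset.range N, ‖a i‖)) := tendsto_atTop_ciInf hanti hbdd
  set P := ⨅ N, ∏ i ∈ Finset.range N, ‖a i‖ with hPdef
  have hP0 : 0 ≤ P := le_ciInf hnonneg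
  rcases eq_or_lt_of_le hP0 with hPeq | hPpos
  · rwa [← hPeq] at htend
  exfalso
  have hPle : ∀ N, P ≤ ∏ i ∈ Finset.range N, ‖a i‖ := fun N => ciInf_le hbdd N
  set R := ‖deriv f 0‖ / P^2 + 1 with hRdef
  have hRpos : 0 < R := by positivity
  have hRgt : ‖deriv f 0‖ < R * P^2 := by
    have hP2 : (0:ℝ) < P^2 := by positivity
    rw [hRdef, add_mul, div_mul_cancel₀ _ hP2.ne', one_mul]
    linarith
  -- the compact component K
  set S := Metric.ball (0:ℂ) 1 ∩ f ⁻¹' (Metric.closedBall 0 R) with hSdef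
  have h0S : (0:ℂ) ∈ S := ⟨h0mem, by simp [hf0, hRpos.le]⟩
  set K := connectedComponentIn S 0 with hKdef
  have hKcompact : IsCompact K := hsemiproper _ (isCompact_closedBall 0 R) 0 h0S
  have hKsub : K ⊆ S := connectedComponentIn_subset _ _
  have h0K : (0:ℂ) ∈ K := mem_connectedComponentIn h0S
  have hKball : K ⊆ Metric.ball (0:ℂ) 1 := fun z hz => (hKsub hz).1
  have hKnorm : ∀ z ∈ K, ‖z‖ < 1 := by
    intro z hz
    have := hKball hz
    simpa [mem_ball, dist_zero_right] using this
  have hint : ∀ z ∈ K, ‖f z‖ < R → z ∈ interior K := by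
    intro z hzK hfz
    have hzb : z ∈ Metric.ball (0:ℂ) 1 := hKball hzK
    have hcont : ContinuousAt f z := hf.continuousOn.continuousAt (isOpen_ball.mem_nhds hzb)
    have h1 : ∀ᶠ y in 𝓝 z, f y ∈ Metric.ball (0:ℂ) R :=
      hcont.eventually_mem (isOpen_ball.mem_nhds (by simpa [mem_ball, dist_zero_right] using hfz))
    have h2 : ∀ᶠ y in 𝓝 z, y ∈ Metric.ball (0:ℂ) 1 :=
      eventually_of_mem (isOpen_ball.mem_nhds hzb) (fun y hy => hy)
    obtain ⟨ε, hε, hball⟩ := Metric.eventually_nhds_iff_ball.mp (h1.and h2)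
    have hsub2 : Metric.ball z ε ⊆ S := fun y hy =>
      ⟨(hball y hy).2, Metric.ball_subset_closedBall (hball y hy).1⟩
    have hsubK : Metric.ball z ε ⊆ K := by
      have hss := (convex_ball z ε).isPreconnected.subset_connectedComponentIn
        (Metric.mem_ball_self hε) hsub2
      rwa [← connectedComponentIn_eq (show z ∈ connectedComponentIn S 0 from hzK)] at hss
    exact mem_interior.mpr ⟨Metric.ball z ε, hsubK, isOpen_ball, Metric.mem_ball_self hε⟩
  have h0int : (0:ℂ) ∈ interior K := hint 0 h0K (by simp [hf0, hRpos])
  have hfrontier : ∀ z ∈ frontier K, ‖f z‖ = R := by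
    intro z hz
    rw [frontier, Set.mem_diff] at hz
    have hzK : z ∈ K := by rw [← hKcompact.isClosed.closure_eq]; exact hz.1
    have hle : ‖f z‖ ≤ R := by
      have := (hKsub hzK).2
      simpa [Metric.mem_closedBall, dist_zero_right] using this
    rcases hle.lt_or_eq with h | h
    · exact absurd (hint z hzK h) hz.2
    · exact h
  -- zeros of f in K are finite
  set Z := {z ∈ K | f z = 0} with hZdef
  have hZeq : Z = K ∩ f ⁻¹' {0} := by
    ext z
    simp [hZdef, Set.mem_sep_iff]
  have hZcl : IsClosed Z := by
    rw [hZeq]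
    exact (hf.continuousOn.mono hKball).preimage_isClosed_of_isClosed
      hKcompact.isClosed isClosed_singleton
  have hZcpt : IsCompact Z := hKcompact.of_isClosed_subset hZcl (sep_subset _ _)
  have hdisc : DiscreteTopology Z := by
    rw [discreteTopology_subtype_iff]
    intro x hx
    have hxb : x ∈ Metric.ball (0:ℂ) 1 := hKball hx.1
    have hev : ∀ᶠ z in 𝓝[≠] x, f z ≠ 0 := by
      rcases (hfa x hxb).eventually_eq_zero_or_eventually_ne_zero with h | h
      · exact absurd h (hnz x hxb)
      · exact h
    rw [inf_principal_eq_bot]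
    filter_upwards [hev] with z hz
    intro hzZ
    exact hz hzZ.2
  have hZfin : Z.Finite := hZcpt.finite (isDiscrete_iff_discreteTopology.mpr hdisc)
  have hSifin : {i | a i ∈ K}.Finite := by
    have hsub : {i | a i ∈ K} ⊆ ⋃ w ∈ Z, {i | a i = w} := by
      intro i hi
      exact mem_biUnion ⟨hi, (ha i).2.2⟩ rfl
    refine Set.Finite.subset (hZfin.biUnion fun w hw => ?_) hsub
    rcases eq_or_ne w 0 with rfl | hw0
    · refine Set.Finite.subset (Set.finite_empty) ?_
      intro i hi
      exact absurd hi (ha i).2.1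
    · exact Set.finite_of_encard_eq_coe (hmult w (hKball hw.1) hw0 hw.2)
  obtain ⟨B, hB⟩ := hSifin.bddAbove
  set N := B + 1 with hNdef
  have hNbig : ∀ i, a i ∈ K → i < N := fun i hi => Nat.lt_succ_of_le (hB hi)
  -- global factorization
  obtain ⟨H, hH, hHeq⟩ := auxE f hf hf0 hnz a ha hmult N
  -- derivative relation
  have hderiv : deriv f 0 = (∏ i ∈ Finset.range N, a i) * H 0 := by
    have hFd : DifferentiableAt ℂ (fun z => (∏ i ∈ Finset.range N, (a i - z)) * H z) 0 := by
      refine DifferentiableAt.mul ?_ ((hH 0 h0mem).differentiableAt (isOpen_ball.mem_nhds h0mem))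
      exact DifferentiableAt.fun_finsetProd fun i _ => (differentiableAt_const _).sub differentiableAt_id
    have hder := (hasDerivAt_id (0:ℂ)).mul hFd.hasDerivAt
    simp only [one_mul, zero_mul, add_zero, id] at hder
    have hevf : f =ᶠ[𝓝 (0:ℂ)] fun z => z * ((∏ i ∈ Finset.range N, (a i - z)) * H z) := by
      filter_upwards [isOpen_ball.mem_nhds h0mem] with z hz
      rw [hHeq z hz, mul_assoc]
    have := (hder.congr_of_eventuallyEq hevf).deriv
    simpa [sub_zero] using this
  have hH0 : H 0 ≠ 0 := by
    intro h
    exact hf'0 (by rw [hderiv, h, mul_zero])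
  -- H does not vanish on K
  have hHne : ∀ z ∈ K, H z ≠ 0 := by
    intro z0 hz0K
    have hz0b := hKball hz0K
    by_cases hfz : f z0 = 0
    · rcases eq_or_ne z0 0 with rfl | hz00
      · exact hH0
      · obtain ⟨m, hm0, hminf, g, hg, hgw, hgev⟩ := auxD (hfa z0 hz0b) hfz (hnz z0 hz0b)
        have hsetz : {i | a i = z0} = (((Finset.range N).filter (fun i => a i = z0)) : Set ℕ) := by
          ext i
          simp only [mem_setOf_eq, Finset.coe_filter, Finset.mem_range]
          constructor
          · intro h
            exact ⟨hNbig i (h ▸ hz0K), h⟩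
          · exact fun h => h.2
        have hcm : ((Finset.range N).filter (fun i => a i = z0)).card = m := by
          have henc := hmult z0 hz0b hz00 hfz
          rw [← hminf, hsetz, Set.encard_coe_eq_coe_finsetCard] at henc
          exact_mod_cast henc
        have heq := auxF hH hz0b hHeq hg hgev hcm.le
        rw [hcm, Nat.sub_self, pow_zero, one_mul] at heq
        intro hHz0
        rw [hHz0, mul_zero, mul_zero] at heq
        exact hgw heq.symm
    · intro hHz0
      exact hfz (by rw [hHeq z0 hz0b, hHz0, mul_zero])
  -- the comparison function
  set ψ : ℂ → ℂ := fun z => (R : ℂ) * (∏ i ∈ Finset.range N, (a i - z)) /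
      ((∏ i ∈ Finset.range N, (1 - (starRingEnd ℂ) (a i) * z))^2 * H z) with hψdef
  have hdenne : ∀ z ∈ K, ((∏ i ∈ Finset.range N, (1 - (starRingEnd ℂ) (a i) * z))^2 * H z) ≠ 0 := by
    intro z hz
    apply mul_ne_zero
    · apply pow_ne_zero
      apply Finset.prod_ne_zero_iff.mpr
      intro i _
      exact auxA (hanorm i) (hKnorm z hz)
    · exact hHne z hz
  have hUb : Bornology.IsBounded (interior K) :=
    hKcompact.isBounded.subset interior_subset
  have hclsub : closure (interior K) ⊆ K := by
    calc closure (interior K) ⊆ closure K := closure_mono interior_subset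
    _ = K := hKcompact.isClosed.closure_eq
  have hdiffcl : DiffContOnCl ℂ ψ (interior K) := by
    constructor
    · apply DifferentiableOn.div
      · exact (differentiableOn_const _).mul
          (DifferentiableOn.fun_finsetProd fun i _ =>
            (differentiableOn_const _).sub differentiableOn_id)
      · exact (DifferentiableOn.pow (DifferentiableOn.fun_finsetProd fun i _ =>
          (differentiableOn_const _).sub ((differentiableOn_const _).mul differentiableOn_id)) 2).mul
          (hH.mono (interior_subset.trans hKball))
      · exact fun z hz => hdenne z (interior_subset hz)
    · apply ContinuousOn.div
      · exact (continuous_const.mul (continuous_finset_prod _ fun i _ =>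
          continuous_const.sub continuous_id)).continuousOn
      · apply ContinuousOn.mul
        · exact ((continuous_finset_prod _ fun i _ =>
            continuous_const.sub (continuous_const.mul continuous_id)).pow 2).continuousOn
        · exact (hH.mono (hclsub.trans hKball)).continuousOn
      · exact fun z hz => hdenne z (hclsub hz)
  have hfrontbound : ∀ z ∈ frontier (interior K), ‖ψ z‖ ≤ 1 := by
    intro z hz
    have hzfr : z ∈ frontier K := frontier_interior_subset hz
    have hzKK : z ∈ K := by
      have h1 := hzfr.1
      rw [hKcompact.isClosed.closure_eq] at h1
      exact h1
    have hfz : ‖f z‖ = R := hfrontier z hzfr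
    have hzb : ‖z‖ < 1 := hKnorm z hzKK
    have hAB : ‖∏ i ∈ Finset.range N, (a i - z)‖
        ≤ ‖∏ i ∈ Finset.range N, (1 - (starRingEnd ℂ) (a i) * z)‖ := by
      rw [norm_prod, norm_prod]
      exact Finset.prod_le_prod (fun i _ => norm_nonneg _)
        (fun i _ => auxB (hanorm i).le hzb.le)
    have hBdpos : 0 < ‖∏ i ∈ Finset.range N, (1 - (starRingEnd ℂ) (a i) * z)‖ :=
      norm_pos_iff.mpr (Finset.prod_ne_zero_iff.mpr fun i _ => auxA (hanorm i) hzb)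
    have hApos : 0 ≤ ‖∏ i ∈ Finset.range N, (a i - z)‖ := norm_nonneg _
    have hHpos : 0 < ‖H z‖ := norm_pos_iff.mpr (hHne z hzKK)
    have hfeq : ‖z‖ * ‖∏ i ∈ Finset.range N, (a i - z)‖ * ‖H z‖ = R := by
      rw [← hfz, hHeq z (hKball hzKK), norm_mul, norm_mul]
    have hψz : ‖ψ z‖ = R * ‖∏ i ∈ Finset.range N, (a i - z)‖ /
        (‖∏ i ∈ Finset.range N, (1 - (starRingEnd ℂ) (a i) * z)‖^2 * ‖H z‖) := by
      simp only [hψdef, norm_div, norm_mul, norm_pow, Complex.norm_real, Real.norm_eq_abs,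
        abs_of_pos hRpos]
    rw [hψz, div_le_one (by positivity)]
    set A := ‖∏ i ∈ Finset.range N, (a i - z)‖
    set Bd := ‖∏ i ∈ Finset.range N, (1 - (starRingEnd ℂ) (a i) * z)‖
    have s1 : ‖z‖ * (A * A) ≤ A * A :=
      mul_le_of_le_one_left (mul_nonneg hApos hApos) hzb.le
    have s2 : ‖z‖ * (A * A) * ‖H z‖ ≤ (A * A) * ‖H z‖ :=
      mul_le_mul_of_nonneg_right s1 hHpos.le
    have s3 : (A * A) * ‖H z‖ ≤ (Bd * Bd) * ‖H z‖ :=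
      mul_le_mul_of_nonneg_right (mul_le_mul hAB hAB hApos hBdpos.le) hHpos.le
    calc R * A = ‖z‖ * (A * A) * ‖H z‖ := by rw [← hfeq]; ring
      _ ≤ (A * A) * ‖H z‖ := s2
      _ ≤ (Bd * Bd) * ‖H z‖ := s3
      _ = Bd^2 * ‖H z‖ := by ring
  have hψ0 : ‖ψ 0‖ ≤ 1 :=
    Complex.norm_le_of_forall_mem_frontier_norm_le hUb hdiffcl hfrontbound (subset_closure h0int)
  have hψ0eq : ‖ψ 0‖ = R * (∏ i ∈ Finset.range N, ‖a i‖) / ‖H 0‖ := by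
    have h1 : ψ 0 = (R : ℂ) * (∏ i ∈ Finset.range N, a i) / H 0 := by
      simp [hψdef]
    rw [h1, norm_div, norm_mul, norm_prod, Complex.norm_real, Real.norm_eq_abs, abs_of_pos hRpos]
  have hd0 : ‖deriv f 0‖ = (∏ i ∈ Finset.range N, ‖a i‖) * ‖H 0‖ := by
    rw [hderiv, norm_mul, norm_prod]
  have hpa : P ≤ ∏ i ∈ Finset.range N, ‖a i‖ := hPle N
  have hHpos0 : 0 < ‖H 0‖ := norm_pos_iff.mpr hH0
  rw [hψ0eq, div_le_one hHpos0] at hψ0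
  have hPP : P^2 ≤ (∏ i ∈ Finset.range N, ‖a i‖) * (∏ i ∈ Finset.range N, ‖a i‖) := by
    rw [pow_two]
    exact mul_le_mul hpa hpa hPpos.le (le_trans hPpos.le hpa)
  have h1 : R * P^2 ≤ R * ((∏ i ∈ Finset.range N, ‖a i‖) * (∏ i ∈ Finset.range N, ‖a i‖)) :=
    mul_le_mul_of_nonneg_left hPP hRpos.le
  have h2 : R * (∏ i ∈ Finset.range N, ‖a i‖) * (∏ i ∈ Finset.range N, ‖a i‖)
      ≤ ‖H 0‖ * (∏ i ∈ Finset.range N, ‖a i‖) :=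
    mul_le_mul_of_nonneg_right hψ0 (hnonneg N)
  have h3 : ‖H 0‖ * (∏ i ∈ Finset.range N, ‖a i‖) = ‖deriv f 0‖ := by rw [hd0]; ring
  linarith
end

section
/- Let f be holomorphic on the unit disc D with u = Re f and v = Im f. Suppose there is a nonconstant closed arc γ ⊆ ∂D such that for every M > 0 there is a neighborhood U_M of γ in ℂ with u(z) > M for all z in U_M ∩ D. Then v is unbounded on D. -/
open Complex Metric Finset Real

lemma arc_cover (n : ℕ) (hn : 0 < n) (ε : ℝ) (hε : Real.pi / n ≤ ε) (z : ℂ) (hz : ‖z‖ = 1) :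
    ∃ k < n, ∃ θ : ℝ, |θ| ≤ ε ∧
      Complex.exp ((2 * Real.pi * k / n : ℝ) * Complex.I) * z
        = Complex.exp ((θ : ℂ) * Complex.I) := by
  have hπ : (0:ℝ) < Real.pi := Real.pi_pos
  have hn' : (0:ℝ) < (n:ℝ) := by exact_mod_cast hn
  set φ : ℝ := Complex.arg z with hφ
  have hzexp : z = Complex.exp ((φ : ℂ) * Complex.I) := by
    have := Complex.norm_mul_exp_arg_mul_I z
    rw [show ‖z‖ = 1 by simpa using hz] at this
    simpa using this.symm
  set x : ℝ := -(φ * n) / (2 * Real.pi) with hx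
  set k' : ℤ := round x with hk'
  set k : ℕ := (k' % (n:ℤ)).toNat with hk
  have hmod0 : 0 ≤ k' % (n:ℤ) := Int.emod_nonneg _ (by exact_mod_cast hn.ne')
  have hmodlt : k' % (n:ℤ) < n := Int.emod_lt_of_pos _ (by exact_mod_cast hn)
  have hkeq : (k:ℤ) = k' % (n:ℤ) := Int.toNat_of_nonneg hmod0
  have hkn : k < n := by omega
  refine ⟨k, hkn, φ + 2 * Real.pi * k' / n, ?_, ?_⟩
  · have hround : |x - (k':ℝ)| ≤ 1/2 := abs_sub_round x
    have hθeq : φ + 2 * Real.pi * k' / n = (2 * Real.pi / n) * ((k':ℝ) - x) := by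
      rw [hx]; field_simp; ring
    rw [hθeq]
    have h1 : |(2 * Real.pi / n) * ((k':ℝ) - x)| = (2 * Real.pi / n) * |(k':ℝ) - x| := by
      rw [abs_mul, abs_of_pos (by positivity)]
    rw [h1, abs_sub_comm]
    calc (2 * Real.pi / n) * |x - (k':ℝ)| ≤ (2 * Real.pi / n) * (1/2) := by
          apply mul_le_mul_of_nonneg_left hround (by positivity)
      _ = Real.pi / n := by ring
      _ ≤ ε := hε
  · have hdvd : ((n:ℤ)) ∣ ((k:ℤ) - k') := by
      exact ⟨-(k' / (n:ℤ)), by rw [hkeq, Int.emod_def]; ring⟩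
    obtain ⟨m, hm⟩ := hdvd
    rw [hzexp, ← Complex.exp_add, Complex.exp_eq_exp_iff_exists_int]
    refine ⟨m, ?_⟩
    have hmr : (k:ℝ) - (k':ℝ) = (n:ℝ) * (m:ℝ) := by exact_mod_cast hm
    have hreal : (2 * Real.pi * k / n : ℝ) + φ = (φ + 2 * Real.pi * k' / n) + m * (2 * Real.pi) := by
      field_simp
      nlinarith [hmr]
    have hC : (2 * (Real.pi:ℂ) * (k:ℂ) / (n:ℂ) + (φ:ℂ))
        = ((φ:ℂ) + 2 * (Real.pi:ℂ) * (k':ℂ) / (n:ℂ)) + (m:ℂ) * (2 * (Real.pi:ℂ)) := by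
      exact_mod_cast congrArg Complex.ofReal hreal
    push_cast
    linear_combination hC * Complex.I

/-- If `f` is holomorphic on the unit disc and its real part `u = Re f` tends to `+∞`
near a nonconstant boundary arc `γ = {e^{iθ} : |θ| ≤ ε}` (in the sense that for every
`M > 0` there is a neighborhood `U` of `γ` with `u > M` on `U ∩ D`), then the
imaginary part `v = Im f` is unbounded on `D`. -/
theorem conjugate_unbounded_of_blowup_on_arc (f : ℂ → ℂ)
    (hf : DifferentiableOn ℂ f (Metric.ball (0 : ℂ) 1))
    (ε : ℝ) (hε : 0 < ε)
    (γ : Set ℂ) (hγ : γ = {z : ℂ | ∃ θ : ℝ, |θ| ≤ ε ∧ z = Complex.exp (θ * Complex.I)})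
    (hblow : ∀ M : ℝ, 0 < M → ∃ U : Set ℂ, IsOpen U ∧ γ ⊆ U ∧
      ∀ z ∈ U ∩ Metric.ball (0 : ℂ) 1, M < (f z).re) :
    ¬ ∃ C : ℝ, ∀ z ∈ Metric.ball (0 : ℂ) 1, |(f z).im| ≤ C := by
  rintro ⟨C, hC⟩
  have hπ : (0:ℝ) < Real.pi := Real.pi_pos
  have hC0 : 0 ≤ C := le_trans (abs_nonneg _) (hC 0 (by simp))
  set w0 : ℂ := (C + 1) * Complex.I with hw0
  set g : ℂ → ℂ := fun z => (f z - w0)⁻¹ with hgdef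
  have hden : ∀ z ∈ Metric.ball (0:ℂ) 1, 1 ≤ ‖f z - w0‖ := by
    intro z hz
    have him : (f z - w0).im = (f z).im - (C + 1) := by simp [hw0]
    have h1 : (f z).im ≤ C := (abs_le.mp (hC z hz)).2
    have h2 : 1 ≤ |(f z - w0).im| := by
      rw [him, abs_of_nonpos (by linarith)]; linarith
    exact le_trans h2 (Complex.abs_im_le_norm _)
  have hne : ∀ z ∈ Metric.ball (0:ℂ) 1, f z - w0 ≠ 0 := by
    intro z hz h
    have := hden z hz
    rw [h] at this; simp at this; linarith
  have hg1 : ∀ z ∈ Metric.ball (0:ℂ) 1, ‖g z‖ ≤ 1 := by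
    intro z hz
    rw [hgdef]; simp only [norm_inv]
    exact inv_le_one_of_one_le₀ (hden z hz)
  have hgd : DifferentiableOn ℂ g (Metric.ball (0:ℂ) 1) :=
    (hf.sub_const w0).inv hne
  -- choose n
  set n : ℕ := max 1 ⌈Real.pi / ε⌉₊ with hn
  have hn0 : 0 < n := lt_of_lt_of_le one_pos (le_max_left _ _)
  have hnR : (0:ℝ) < n := by exact_mod_cast hn0
  have hπn : Real.pi / n ≤ ε := by
    have h1 : Real.pi / ε ≤ (n:ℝ) := le_trans (Nat.le_ceil _) (by exact_mod_cast le_max_right 1 _)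
    rw [div_le_iff₀ hnR]
    rw [div_le_iff₀ hε] at h1
    nlinarith
  set c : ℕ → ℂ := fun k => Complex.exp ((2 * Real.pi * k / n : ℝ) * Complex.I) with hc
  have hcnorm : ∀ k, ‖c k‖ = 1 := fun k => Complex.norm_exp_ofReal_mul_I _
  have hmaps : ∀ k, Set.MapsTo (fun z => c k * z) (Metric.ball (0:ℂ) 1) (Metric.ball (0:ℂ) 1) := by
    intro k z hz
    simp only [mem_ball, dist_zero_right] at hz ⊢
    rw [norm_mul, hcnorm, one_mul]; exact hz
  set G : ℂ → ℂ := fun z => ∏ k ∈ Finset.range n, g (c k * z) with hG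
  have hGd : DifferentiableOn ℂ G (Metric.ball (0:ℂ) 1) := by
    apply DifferentiableOn.fun_finsetProd
    intro k _
    exact hgd.comp ((differentiable_id.const_mul (c k)).differentiableOn) (hmaps k)
  -- key estimate
  have key : ∀ δ : ℝ, 0 < δ → δ < 1 → ‖G 0‖ ≤ δ := by
    intro δ hδ0 hδ1
    obtain ⟨U, hUo, hγU, hU⟩ := hblow (1/δ + C + 1) (by positivity)
    have hsmall : ∀ z ∈ U ∩ Metric.ball (0:ℂ) 1, ‖g z‖ ≤ δ := by
      rintro z ⟨hzU, hzb⟩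
      have h1 : 1/δ + C + 1 < (f z).re := hU z ⟨hzU, hzb⟩
      have h2 : (f z - w0).re = (f z).re := by simp [hw0]
      have h3 : 1/δ ≤ ‖f z - w0‖ := by
        calc 1/δ ≤ (f z - w0).re := by rw [h2]; linarith
        _ ≤ |(f z - w0).re| := le_abs_self _
        _ ≤ ‖f z - w0‖ := Complex.abs_re_le_norm _
      rw [hgdef]; simp only [norm_inv]
      rw [inv_le_comm₀ (lt_of_lt_of_le (by positivity) h3) hδ0, ← one_div]
      exact h3
    set W : Set ℂ := ⋃ k ∈ Finset.range n, (fun z => c k * z) ⁻¹' U with hW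
    have hWo : IsOpen W := by
      apply isOpen_biUnion
      intro k _
      exact hUo.preimage (by continuity)
    have hWs : Metric.sphere (0:ℂ) 1 ⊆ W := by
      intro z hz
      have hz1 : ‖z‖ = 1 := by simpa using hz
      obtain ⟨k, hk, θ, hθ, heq⟩ := arc_cover n hn0 ε hπn z hz1
      refine Set.mem_biUnion (Finset.mem_range.mpr hk) ?_
      show c k * z ∈ U
      apply hγU
      rw [hγ]
      exact ⟨θ, hθ, heq⟩
    obtain ⟨ρ, hρ0, hρ⟩ := (isCompact_sphere (0:ℂ) 1).exists_thickening_subset_open hWo hWs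
    set r : ℝ := max (1 - ρ/2) (1/2) with hr
    have hr0 : 0 < r := lt_of_lt_of_le one_half_pos (le_max_right _ _)
    have hr1 : r < 1 := by
      apply max_lt <;> linarith
    have hsph : ∀ z ∈ Metric.sphere (0:ℂ) r, ‖G z‖ ≤ δ := by
      intro z hz
      have hzr : ‖z‖ = r := by simpa using hz
      have hzW : z ∈ W := by
        apply hρ
        rw [Metric.mem_thickening_iff]
        refine ⟨(r : ℂ)⁻¹ * z, ?_, ?_⟩
        · simp only [mem_sphere_iff_norm, sub_zero, norm_mul, hzr]
          rw [norm_inv, Complex.norm_real, Real.norm_of_nonneg hr0.le]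
          field_simp
        · rw [dist_eq_norm]
          have : z - (r:ℂ)⁻¹ * z = (1 - (r:ℂ)⁻¹) * z := by ring
          rw [this, norm_mul, hzr]
          have hrc : ‖(1:ℂ) - (r:ℂ)⁻¹‖ = 1/r - 1 := by
            rw [show (1:ℂ) - (r:ℂ)⁻¹ = ((1 - r⁻¹ : ℝ) : ℂ) by push_cast; ring]
            rw [Complex.norm_real, Real.norm_eq_abs, abs_of_nonpos (by
              rw [sub_nonpos]; exact (one_le_inv₀ hr0).mpr hr1.le)]
            rw [one_div]; ring
          rw [hrc]
          have : (1/r - 1) * r = 1 - r := by field_simp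
          rw [this]
          have : 1 - r ≤ ρ/2 := by
            have := le_max_left (1 - ρ/2) (1/2)
            simp only [← hr] at this; linarith
          linarith
      obtain ⟨k, hkmem, hkU⟩ := Set.mem_iUnion₂.mp hzW
      have hkball : ∀ j, c j * z ∈ Metric.ball (0:ℂ) 1 := by
        intro j
        simp only [mem_ball, dist_zero_right, norm_mul, hcnorm, one_mul, hzr]
        exact hr1
      have hnorm : ‖G z‖ = ∏ j ∈ Finset.range n, ‖g (c j * z)‖ := norm_prod _ _
      rw [hnorm, ← Finset.mul_prod_erase _ _ hkmem]
      have h1 : ‖g (c k * z)‖ ≤ δ := hsmall _ ⟨hkU, hkball k⟩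
      have h2 : ∏ j ∈ (Finset.range n).erase k, ‖g (c j * z)‖ ≤ 1 :=
        Finset.prod_le_one (fun j _ => norm_nonneg _) (fun j _ => hg1 _ (hkball j))
      calc ‖g (c k * z)‖ * ∏ j ∈ (Finset.range n).erase k, ‖g (c j * z)‖
          ≤ δ * 1 := mul_le_mul h1 h2 (Finset.prod_nonneg fun j _ => norm_nonneg _) hδ0.le
        _ = δ := mul_one δ
    -- maximum principle on ball 0 r
    have hcl : DiffContOnCl ℂ G (Metric.ball (0:ℂ) r) := by
      apply DifferentiableOn.diffContOnCl
      rw [closure_ball (0:ℂ) hr0.ne']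
      exact hGd.mono (closedBall_subset_ball hr1)
    have h0mem : (0:ℂ) ∈ closure (Metric.ball (0:ℂ) r) :=
      subset_closure (mem_ball_self hr0)
    have := Complex.norm_le_of_forall_mem_frontier_norm_le (isBounded_ball) hcl
      (fun z hz => hsph z (by rwa [frontier_ball (0:ℂ) hr0.ne'] at hz)) h0mem
    exact this
  -- conclude
  have hG0 : G 0 = g 0 ^ n := by
    rw [hG]
    simp [Finset.prod_const]
  have hgne : g 0 ≠ 0 := inv_ne_zero (hne 0 (by simp))
  have hzero : ‖G 0‖ = 0 := by
    by_contra h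
    have hpos : 0 < ‖G 0‖ := lt_of_le_of_ne (norm_nonneg _) (Ne.symm h)
    have hlt := key (min ‖G 0‖ 1 / 2) (by positivity)
      (by have := min_le_right ‖G 0‖ 1; linarith)
    have := min_le_left ‖G 0‖ 1
    have := min_le_right ‖G 0‖ 1
    have hmin : 0 < min ‖G 0‖ 1 := lt_min hpos one_pos
    linarith
  rw [norm_eq_zero] at hzero
  rw [hG0] at hzero
  exact hgne (pow_eq_zero_iff hn0.ne' |>.mp hzero)
end

section
/- Let (gᵢ)_{i∈ℕ} be holomorphic functions on a disc B_ε ⊆ ℂ centered at 0, with |gᵢ(η)| < 1 for all η ∈ B_ε and all i. Let G_k = g₁·g₂·⋯·g_k and Π(η) = ∏_{i=1}^∞ |gᵢ(η)| (the limit of the decreasing sequence |G_k(η)|). If Π(η) = 0 for all η ≠ 0 in B_ε, then Π(0) = 0; in particular Π is continuous at 0. -/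
set_option maxHeartbeats 1000000


open Complex Metric Filter

/-- Let `gᵢ` be holomorphic functions on a disc `B_ε ⊆ ℂ` centered at `0` with
`|gᵢ| < 1`, and let `Π η = ∏_{i} |gᵢ(η)|` be the (decreasing) limit of the partial
products. If `Π η = 0` for all `η ≠ 0` in `B_ε`, then `Π 0 = 0`; in particular `Π`
is continuous at `0`. -/
theorem infinite_product_vanishes_at_zero (ε : ℝ) (hε : 0 < ε)
    (g : ℕ → ℂ → ℂ)
    (hg : ∀ i, DifferentiableOn ℂ (g i) (Metric.ball (0 : ℂ) ε))
    (hlt : ∀ i, ∀ η ∈ Metric.ball (0 : ℂ) ε, ‖g i η‖ < 1)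
    (Pi : ℂ → ℝ)
    (hPi : ∀ η ∈ Metric.ball (0 : ℂ) ε,
      Tendsto (fun k => ∏ i ∈ Finset.range k, ‖g i η‖) atTop (nhds (Pi η)))
    (hzero : ∀ η ∈ Metric.ball (0 : ℂ) ε, η ≠ 0 → Pi η = 0) :
    Pi 0 = 0 ∧ ContinuousWithinAt Pi (Metric.ball (0 : ℂ) ε) 0 := by
  have h0mem : (0 : ℂ) ∈ Metric.ball (0 : ℂ) ε := by simpa using hε
  set r : ℝ := ε / 2 with hr_def
  have hr : 0 < r := by positivity
  have hrε : r < ε := by simp [hr_def]; linarith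
  -- the partial products
  set G : ℕ → ℂ → ℂ := fun k z => ∏ i ∈ Finset.range k, g i z with hG
  have hsub : Metric.closedBall (0 : ℂ) r ⊆ Metric.ball (0 : ℂ) ε :=
    Metric.closedBall_subset_ball hrε
  have hGd : ∀ k, DifferentiableOn ℂ (G k) (Metric.closedBall (0 : ℂ) r) := by
    intro k
    apply DifferentiableOn.fun_finset_prod
    intro i _
    exact ((hg i).mono hsub)
  -- membership of circle points
  have hcirc_mem : ∀ θ : ℝ, circleMap 0 r θ ∈ Metric.ball (0 : ℂ) ε := by
    intro θ
    have : ‖circleMap 0 r θ‖ = r := by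
      simpa [Real.norm_eq_abs, abs_of_pos hr] using norm_circleMap_zero r θ
    simpa [Metric.mem_ball, dist_eq_norm] using this.trans_lt hrε
  have hcirc_ne : ∀ θ : ℝ, circleMap 0 r θ ≠ 0 := fun θ =>
    circleMap_ne_center hr.ne'
  -- Cauchy integral formula bound: 2π ‖G k 0‖ ≤ ∫ θ in 0..2π, ‖G k (circleMap 0 r θ)‖
  have key : ∀ k, 2 * Real.pi * ‖G k 0‖ ≤
      ∫ θ in (0:ℝ)..(2 * Real.pi), ‖G k (circleMap 0 r θ)‖ := by
    intro k
    have hc := (hGd k).circleIntegral_sub_inv_smul (c := 0) (w := 0)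
      (by simpa using hr)
    have hnorm : ‖(2 * Real.pi * I : ℂ) • G k 0‖ = 2 * Real.pi * ‖G k 0‖ := by
      simp [norm_smul, norm_mul, abs_of_pos Real.pi_pos, mul_assoc]
    rw [← hnorm, ← hc]
    rw [circleIntegral]
    refine (intervalIntegral.norm_integral_le_integral_norm Real.two_pi_pos.le).trans_eq ?_
    apply intervalIntegral.integral_congr
    intro θ _
    have h1 : ‖circleMap 0 r θ‖ = r := by
      simpa [Real.norm_eq_abs, abs_of_pos hr] using norm_circleMap_zero r θ
    simp only [deriv_circleMap, sub_zero, norm_smul, norm_inv, norm_mul,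
      Complex.norm_I, mul_one, h1]
    field_simp
  -- the integrals tend to 0 by dominated convergence
  have hprod_le_one : ∀ k, ∀ η ∈ Metric.ball (0 : ℂ) ε,
      ∏ i ∈ Finset.range k, ‖g i η‖ ≤ 1 := by
    intro k η hη
    exact Finset.prod_le_one (fun i _ => norm_nonneg _) (fun i _ => (hlt i η hη).le)
  have hGk_norm : ∀ k z, ‖G k z‖ = ∏ i ∈ Finset.range k, ‖g i z‖ := by
    intro k z
    simp [hG, norm_prod]
  have hint : Tendsto (fun k => ∫ θ in (0:ℝ)..(2 * Real.pi),
      ‖G k (circleMap 0 r θ)‖) atTop (nhds 0) := by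
    have hDCT : Tendsto (fun k => ∫ θ in (0:ℝ)..(2 * Real.pi),
        ‖G k (circleMap 0 r θ)‖) atTop (nhds (∫ _θ in (0:ℝ)..(2 * Real.pi), (0:ℝ))) := by
      apply intervalIntegral.tendsto_integral_filter_of_dominated_convergence
        (bound := fun _ => (1:ℝ))
      · filter_upwards with k
        have hd : DifferentiableOn ℂ (G k) (Metric.ball (0 : ℂ) ε) :=
          DifferentiableOn.fun_finset_prod (fun i _ => hg i)
        have : ContinuousOn (G k) (Metric.ball (0 : ℂ) ε) := hd.continuousOn
        exact (this.comp_continuous (continuous_circleMap 0 r)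
          hcirc_mem).norm.aestronglyMeasurable
      · filter_upwards with k
        filter_upwards with θ _
        rw [Real.norm_eq_abs, _root_.abs_of_nonneg (norm_nonneg _), hGk_norm]
        exact hprod_le_one k _ (hcirc_mem θ)
      · exact intervalIntegrable_const
      · filter_upwards with θ _
        have := hPi (circleMap 0 r θ) (hcirc_mem θ)
        rw [hzero (circleMap 0 r θ) (hcirc_mem θ) (hcirc_ne θ)] at this
        simpa [hGk_norm] using this
    simpa using hDCT
  -- squeeze: ‖G k 0‖ → 0
  have hG0 : Tendsto (fun k => ‖G k 0‖) atTop (nhds 0) := by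
    have hpos : ∀ k, 0 ≤ ‖G k 0‖ := fun k => norm_nonneg _
    have hle : ∀ k, ‖G k 0‖ ≤ (2 * Real.pi)⁻¹ *
        ∫ θ in (0:ℝ)..(2 * Real.pi), ‖G k (circleMap 0 r θ)‖ := by
      intro k
      rw [← mul_le_mul_iff_right₀ Real.two_pi_pos]
      calc 2 * Real.pi * ‖G k 0‖ ≤ _ := key k
        _ = 2 * Real.pi * ((2 * Real.pi)⁻¹ * _) := by
            rw [← mul_assoc, mul_inv_cancel₀ Real.two_pi_pos.ne', one_mul]
    have htend : Tendsto (fun k => (2 * Real.pi)⁻¹ *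
        ∫ θ in (0:ℝ)..(2 * Real.pi), ‖G k (circleMap 0 r θ)‖) atTop (nhds 0) := by
      simpa using hint.const_mul (2 * Real.pi)⁻¹
    exact squeeze_zero hpos hle htend
  have hPi0 : Pi 0 = 0 := by
    have h1 := hPi 0 h0mem
    have h2 : Tendsto (fun k => ∏ i ∈ Finset.range k, ‖g i 0‖) atTop (nhds 0) := by
      simpa [hGk_norm] using hG0
    exact tendsto_nhds_unique h1 h2
  refine ⟨hPi0, ?_⟩
  have : ContinuousWithinAt (fun _ : ℂ => (0:ℝ)) (Metric.ball (0 : ℂ) ε) 0 :=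
    continuousWithinAt_const
  apply this.congr
  · intro y hy
    by_cases hy0 : y = 0
    · rw [hy0, hPi0]
    · exact hzero y hy hy0
  · exact hPi0
end

section
/- Let f = u + iv be holomorphic on the unit disc D. If v is bounded on D and for some ε > 0 and every M > 0 there is δ > 0 such that u(re^{iθ}) > M whenever 1−δ < r < 1 and |θ| ≤ ε, then we reach a contradiction; i.e., u cannot tend to +∞ uniformly on a boundary arc of positive length while v stays bounded. -/
open Complex Metric

/-- Let `f = u + iv` be holomorphic on the unit disc. It cannot happen that `v` is
bounded on `D` while `u` tends to `+∞` uniformly on a boundary arc of positive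
length `{e^{iθ} : |θ| ≤ ε}`. -/
theorem no_bounded_conjugate_with_uniform_blowup (f : ℂ → ℂ)
    (hf : DifferentiableOn ℂ f (Metric.ball (0 : ℂ) 1))
    (hv : ∃ C : ℝ, ∀ z ∈ Metric.ball (0 : ℂ) 1, |(f z).im| ≤ C)
    (ε : ℝ) (hε : 0 < ε)
    (hu : ∀ M : ℝ, 0 < M → ∃ δ : ℝ, 0 < δ ∧ ∀ r θ : ℝ,
      0 < r → 1 - δ < r → r < 1 → |θ| ≤ ε →
        M < (f ((r : ℂ) * Complex.exp (θ * Complex.I))).re) :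
    False := by
  obtain ⟨C, hC⟩ := hv
  have hπ := Real.pi_pos
  have hC0 : 0 ≤ C := le_trans (abs_nonneg _) (hC 0 (mem_ball_self one_pos))
  set a : ℝ := Real.pi / (2 * (C + 1)) with ha_def
  have ha : 0 < a := by positivity
  have haC : a * C < Real.pi / 2 := by
    rw [ha_def, div_mul_eq_mul_div, div_lt_div_iff₀ (by positivity) (by norm_num)]
    nlinarith
  have haC0 : 0 ≤ a * C := by positivity
  set c₀ : ℝ := Real.cos (a * C) with hc0_def
  have hc₀ : 0 < c₀ := Real.cos_pos_of_mem_Ioo ⟨by linarith, haC⟩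
  -- the auxiliary bounded function h
  set h : ℂ → ℂ := fun z => 2 / (Complex.exp ((a : ℂ) * f z) + 1) with hh_def
  -- lower bound on the denominator
  have hden : ∀ w ∈ ball (0 : ℂ) 1,
      c₀ * Real.exp (a * (f w).re) + 1 ≤ ‖Complex.exp ((a : ℂ) * f w) + 1‖ := by
    intro w hw
    have him : |a * (f w).im| ≤ a * C := by
      rw [abs_mul, abs_of_pos ha]
      exact mul_le_mul_of_nonneg_left (hC w hw) ha.le
    have hcos : c₀ ≤ Real.cos (a * (f w).im) := by
      rw [← Real.cos_abs (a * (f w).im)]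
      exact Real.cos_le_cos_of_nonneg_of_le_pi (abs_nonneg _) (by linarith) him
    have hre : ((a : ℂ) * f w).re = a * (f w).re := by
      simp [Complex.mul_re]
    have him' : ((a : ℂ) * f w).im = a * (f w).im := by
      simp [Complex.mul_im]
    have hkey : c₀ * Real.exp (a * (f w).re) + 1 ≤ (Complex.exp ((a : ℂ) * f w) + 1).re := by
      have := Complex.exp_re ((a : ℂ) * f w)
      have hexp : (0:ℝ) < Real.exp (((a : ℂ) * f w).re) := Real.exp_pos _
      simp only [Complex.add_re, Complex.one_re]
      rw [this, hre, him']
      have : c₀ * Real.exp (a * (f w).re) ≤ Real.exp (a * (f w).re) * Real.cos (a * (f w).im) := by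
        nlinarith [Real.exp_pos (a * (f w).re)]
      linarith
    exact le_trans hkey (Complex.re_le_norm _)
  have hden1 : ∀ w ∈ ball (0 : ℂ) 1, 1 ≤ ‖Complex.exp ((a : ℂ) * f w) + 1‖ := by
    intro w hw
    have := hden w hw
    nlinarith [Real.exp_pos (a * (f w).re)]
  have hne : ∀ w ∈ ball (0 : ℂ) 1, Complex.exp ((a : ℂ) * f w) + 1 ≠ 0 := by
    intro w hw hzero
    have := hden1 w hw
    rw [hzero] at this
    simp at this
    linarith
  have hnorm_h : ∀ w ∈ ball (0 : ℂ) 1, ‖h w‖ = 2 / ‖Complex.exp ((a : ℂ) * f w) + 1‖ := by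
    intro w hw
    rw [hh_def]
    simp [norm_div]
  have hh2 : ∀ w ∈ ball (0 : ℂ) 1, ‖h w‖ ≤ 2 := by
    intro w hw
    rw [hnorm_h w hw]
    calc 2 / ‖Complex.exp ((a : ℂ) * f w) + 1‖ ≤ 2 / 1 :=
          div_le_div_of_nonneg_left (by norm_num) one_pos (hden1 w hw)
      _ = 2 := by norm_num
  have hhsmall : ∀ w ∈ ball (0 : ℂ) 1,
      ‖h w‖ ≤ 2 / (c₀ * Real.exp (a * (f w).re)) := by
    intro w hw
    rw [hnorm_h w hw]
    have h1 : (0:ℝ) < c₀ * Real.exp (a * (f w).re) := by positivity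
    exact div_le_div_of_nonneg_left (by norm_num) h1 (by linarith [hden w hw])
  -- choose number of rotations
  set n : ℕ := ⌈Real.pi / ε⌉₊ + 1 with hn_def
  have hn0 : 0 < n := Nat.succ_pos _
  have hnε : Real.pi / n ≤ ε := by
    have h1 : Real.pi / ε ≤ n := by
      calc Real.pi / ε ≤ ⌈Real.pi / ε⌉₊ := Nat.le_ceil _
        _ ≤ n := by exact_mod_cast Nat.le_succ _
    rw [div_le_iff₀ (by exact_mod_cast hn0)]
    rw [div_le_iff₀ hε] at h1
    linarith
  -- rotations
  set ζ : ℕ → ℂ := fun k => Complex.exp (((2 * Real.pi * k / n : ℝ) : ℂ) * Complex.I) with hζ_def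
  have hζabs : ∀ k, ‖ζ k‖ = 1 := fun k => Complex.norm_exp_ofReal_mul_I _
  have hmap : ∀ k, ∀ z ∈ ball (0 : ℂ) 1, ζ k * z ∈ ball (0 : ℂ) 1 := by
    intro k z hz
    simp only [mem_ball, dist_zero_right] at hz ⊢
    rw [norm_mul]
    simp only [hζabs]
    simpa using hz
  -- the product function
  set H : ℂ → ℂ := fun z => ∏ k ∈ Finset.range n, h (ζ k * z) with hH_def
  have hHdiff : DifferentiableOn ℂ H (ball (0 : ℂ) 1) := by
    apply DifferentiableOn.fun_finsetProd
    intro k _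
    have h1 : DifferentiableOn ℂ (fun z => f (ζ k * z)) (ball (0 : ℂ) 1) :=
      hf.comp ((differentiable_id.const_mul (ζ k)).differentiableOn) (hmap k)
    have h2 : DifferentiableOn ℂ (fun z => Complex.exp ((a : ℂ) * f (ζ k * z)) + 1)
        (ball (0 : ℂ) 1) := ((h1.const_mul _).cexp).add_const 1
    exact (differentiableOn_const 2).div h2 (fun z hz => hne _ (hmap k z hz))
  set b : ℝ := ‖h 0‖ with hb_def
  have hb : 0 < b := by
    rw [hb_def, hnorm_h 0 (mem_ball_self one_pos)]
    have := hden1 0 (mem_ball_self one_pos)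
    positivity
  have hH0 : ‖H 0‖ = b ^ n := by
    rw [hH_def]
    simp only [mul_zero]
    rw [norm_prod]
    simp [hb_def, Finset.prod_const]
  -- choose M
  set X : ℝ := (2:ℝ) ^ n / (c₀ * b ^ n) with hX_def
  have hX : 0 < X := by positivity
  set M : ℝ := max 1 ((Real.log X + 1) / a) with hM_def
  have hM : 0 < M := lt_of_lt_of_le one_pos (le_max_left _ _)
  have hMX : X < Real.exp (a * M) := by
    have h1 : Real.log X + 1 ≤ a * M := by
      have := le_max_right 1 ((Real.log X + 1) / a)
      calc Real.log X + 1 = a * ((Real.log X + 1) / a) := by field_simp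
        _ ≤ a * M := mul_le_mul_of_nonneg_left (le_max_right _ _) ha.le
    calc X = Real.exp (Real.log X) := (Real.exp_log hX).symm
      _ < Real.exp (a * M) := Real.exp_lt_exp.2 (by linarith)
  have hkeyM : (2:ℝ) ^ n / (c₀ * Real.exp (a * M)) < b ^ n := by
    rw [div_lt_iff₀ (by positivity)]
    have h2 : (2:ℝ)^n = X * (c₀ * b ^ n) := by rw [hX_def]; field_simp
    calc (2:ℝ)^n = X * (c₀ * b ^ n) := h2
      _ < Real.exp (a * M) * (c₀ * b ^ n) := by
          exact mul_lt_mul_of_pos_right hMX (by positivity)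
      _ = b ^ n * (c₀ * Real.exp (a * M)) := by ring
  obtain ⟨δ, hδ, hδu⟩ := hu M hM
  set r : ℝ := max (1 - δ / 2) (1 / 2) with hr_def
  have hr0 : 0 < r := lt_of_lt_of_le one_half_pos (le_max_right _ _)
  have hr1 : r < 1 := max_lt (by linarith) (by norm_num)
  have hrδ : 1 - δ < r := lt_of_lt_of_le (by linarith) (le_max_left _ _)
  -- boundary estimate
  have hbd : ∀ z ∈ sphere (0 : ℂ) r, ‖H z‖ ≤ (2:ℝ) ^ n / (c₀ * Real.exp (a * M)) := by
    intro z hz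
    rw [mem_sphere_zero_iff_norm] at hz
    have habs : ‖z‖ = r := hz
    set φ : ℝ := Complex.arg z with hφ_def
    set t : ℝ := -(φ * n) / (2 * Real.pi) with ht_def
    set k' : ℤ := round t with hk'_def
    set θ : ℝ := φ + 2 * Real.pi * k' / n with hθ_def
    have hθeq : θ = (2 * Real.pi / n) * (k' - t) := by
      rw [hθ_def, ht_def]
      have hn' : (n:ℝ) ≠ 0 := by exact_mod_cast hn0.ne'
      field_simp
      ring
    have hθsmall : |θ| ≤ ε := by
      have h1 : |(k' : ℝ) - t| ≤ 1 / 2 := by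
        have := abs_sub_round t
        rw [abs_sub_comm] at this
        convert this using 2
      have h2 : |θ| ≤ (2 * Real.pi / n) * (1/2) := by
        rw [hθeq, abs_mul, abs_of_pos (by positivity : (0:ℝ) < 2 * Real.pi / n)]
        exact mul_le_mul_of_nonneg_left h1 (by positivity)
      calc |θ| ≤ (2 * Real.pi / n) * (1/2) := h2
        _ = Real.pi / n := by ring
        _ ≤ ε := hnε
    set k : ℕ := (k' % (n:ℤ)).toNat with hk_def
    have hkn : k < n := by
      have h1 : k' % (n:ℤ) < (n:ℤ) := Int.emod_lt_of_pos _ (by exact_mod_cast hn0)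
      omega
    have hkmem : k ∈ Finset.range n := Finset.mem_range.2 hkn
    have hkval : (k : ℤ) = k' % (n:ℤ) := by
      have : 0 ≤ k' % (n:ℤ) := Int.emod_nonneg _ (by exact_mod_cast hn0.ne')
      omega
    set q : ℤ := k' / (n:ℤ) with hq_def
    have hqeq : (k' : ℝ) = (n:ℝ) * (q:ℝ) + (k:ℝ) := by
      have h2 : (n:ℤ) * q + (k:ℤ) = k' := by rw [hkval]; exact Int.mul_ediv_add_emod k' n
      exact_mod_cast h2.symm
    -- the rotated point
    have hzrot : ζ k * z = (r : ℂ) * Complex.exp ((θ:ℂ) * Complex.I) := by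
      have hz' : ((‖z‖ : ℝ) : ℂ) * Complex.exp ((φ:ℂ) * Complex.I) = z :=
        Complex.norm_mul_exp_arg_mul_I z
      rw [habs] at hz'
      rw [← hz', hζ_def]
      have hexpθ : Complex.exp ((θ:ℂ) * Complex.I) =
          Complex.exp (((2 * Real.pi * k / n : ℝ) : ℂ) * Complex.I) *
          Complex.exp ((φ:ℂ) * Complex.I) := by
        have hθreal : θ = 2 * Real.pi * k / n + φ + q * (2 * Real.pi) := by
          have hn' : (n:ℝ) ≠ 0 := by exact_mod_cast hn0.ne'
          rw [hθ_def, hqeq]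
          field_simp
          ring
        have e1 : (θ:ℂ) * Complex.I =
            ((2 * Real.pi * k / n + φ : ℝ) : ℂ) * Complex.I +
            (q:ℂ) * (2 * (Real.pi:ℂ) * Complex.I) := by
          rw [hθreal]; push_cast; ring
        rw [e1, Complex.exp_add, Complex.exp_int_mul_two_pi_mul_I, mul_one,
          ← Complex.exp_add]
        congr 1
        push_cast
        ring
      rw [hexpθ]
      ring
    have hrot_in : ζ k * z ∈ ball (0 : ℂ) 1 := by
      simp only [mem_ball, dist_zero_right, norm_mul, hζabs, one_mul]
      rw [habs]; exact hr1
    have hub : M < (f (ζ k * z)).re := by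
      rw [hzrot]
      exact hδu r θ hr0 hrδ hr1 hθsmall
    -- the small factor
    have hsmallk : ‖h (ζ k * z)‖ ≤ 2 / (c₀ * Real.exp (a * M)) := by
      calc ‖h (ζ k * z)‖ ≤ 2 / (c₀ * Real.exp (a * (f (ζ k * z)).re)) :=
            hhsmall _ hrot_in
        _ ≤ 2 / (c₀ * Real.exp (a * M)) := by
            apply div_le_div_of_nonneg_left (by norm_num) (by positivity)
            have : Real.exp (a * M) ≤ Real.exp (a * (f (ζ k * z)).re) :=
              Real.exp_le_exp.2 (mul_le_mul_of_nonneg_left hub.le ha.le)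
            exact mul_le_mul_of_nonneg_left this hc₀.le
    -- product bound
    have hz_in : z ∈ ball (0:ℂ) 1 := by
      simp only [mem_ball, dist_zero_right, habs]; exact hr1
    have hprod : ‖H z‖ = ∏ j ∈ Finset.range n, ‖h (ζ j * z)‖ := by
      rw [hH_def]; exact norm_prod _ _
    rw [hprod, ← Finset.mul_prod_erase _ _ hkmem]
    have hrest : ∏ j ∈ (Finset.range n).erase k, ‖h (ζ j * z)‖ ≤ 2 ^ (n - 1) := by
      have h1 := Finset.prod_le_prod (f := fun j => ‖h (ζ j * z)‖)
        (g := fun _ => (2:ℝ)) (s := (Finset.range n).erase k)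
        (fun j _ => norm_nonneg _) (fun j _ => hh2 _ (hmap j z hz_in))
      rwa [Finset.prod_const, Finset.card_erase_of_mem hkmem, Finset.card_range] at h1
    have hrest0 : (0:ℝ) ≤ ∏ j ∈ (Finset.range n).erase k, ‖h (ζ j * z)‖ :=
      Finset.prod_nonneg (fun j _ => norm_nonneg _)
    calc ‖h (ζ k * z)‖ * ∏ j ∈ (Finset.range n).erase k, ‖h (ζ j * z)‖
        ≤ (2 / (c₀ * Real.exp (a * M))) * 2 ^ (n - 1) := by
          exact mul_le_mul hsmallk hrest hrest0 (by positivity)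
      _ = (2:ℝ) ^ n / (c₀ * Real.exp (a * M)) := by
          have h2n : (2:ℝ) ^ n = 2 * 2 ^ (n - 1) := by
            conv_lhs => rw [show n = (n - 1) + 1 by omega]
            rw [pow_succ]; ring
          rw [h2n]; ring
  -- maximum modulus principle
  have hsub : closure (ball (0:ℂ) r) ⊆ ball (0:ℂ) 1 := by
    rw [closure_ball (0:ℂ) hr0.ne']
    exact closedBall_subset_ball hr1
  have hdc : DiffContOnCl ℂ H (ball (0:ℂ) r) := (hHdiff.mono hsub).diffContOnCl
  have h0cl : (0:ℂ) ∈ closure (ball (0:ℂ) r) := by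
    rw [closure_ball (0:ℂ) hr0.ne']
    exact mem_closedBall_self hr0.le
  have hfr : ∀ z ∈ frontier (ball (0:ℂ) r), ‖H z‖ ≤ (2:ℝ) ^ n / (c₀ * Real.exp (a * M)) := by
    intro z hz
    rw [frontier_ball (0:ℂ) hr0.ne'] at hz
    exact hbd z hz
  have hfinal := Complex.norm_le_of_forall_mem_frontier_norm_le isBounded_ball hdc hfr h0cl
  rw [hH0] at hfinal
  linarith
end
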